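/- arXiv:2112.07293 — 9 statements merged into one kernel-verified Lean document; each statement's English description precedes it below -/
import Mathlib

section
/- Let M be a d-dimensional subspace of the space of n×n matrices over the finite field F_q with d > 0, such that every element of M has determinant zero, but the determinantal polynomial P_M (computed with respect to some basis) is not the zero polynomial. Then q < n. -/
open MvPolynomial

/-- The determinantal polynomial of a tuple of `n × n` matrices:
`det (x_1 M_1 + ⋯ + x_d M_d)` as a polynomial in `d` variables. -/
noncomputable def detPoly {F : Type*} [Field F] {n d : ℕ}
    (b : Fin d → Matrix (Fin n) (Fin n) F) : MvPolynomial (Fin d) F :=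
  Matrix.det (Matrix.of fun i j => ∑ k, X k * C (b k i j))

lemma finsupp_degree_single {σ : Type*} (i : σ) (k : ℕ) :
    Finsupp.degree (Finsupp.single i k) = k := by
  rcases eq_or_ne k 0 with rfl | hk
  · simp [Finsupp.degree]
  · rw [Finsupp.degree_apply, Finsupp.support_single_ne_zero _ hk, Finset.sum_singleton,
      Finsupp.single_eq_same]

lemma detPoly_isHomogeneous {F : Type*} [Field F] {n d : ℕ}
    (b : Fin d → Matrix (Fin n) (Fin n) F) :
    (detPoly b).IsHomogeneous n := by
  rw [detPoly, Matrix.det_apply']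
  apply MvPolynomial.IsHomogeneous.sum
  intro σ _
  have h1 : (∏ i, (Matrix.of fun i j => ∑ k, X k * C (b k i j)) (σ i) i :
      MvPolynomial (Fin d) F).IsHomogeneous n := by
    have := MvPolynomial.IsHomogeneous.prod (Finset.univ : Finset (Fin n))
      (fun i => (Matrix.of fun i j => ∑ k, X k * C (b k i j)) (σ i) i) (fun _ => 1)
      (fun i _ => by
        simp only [Matrix.of_apply]
        apply MvPolynomial.IsHomogeneous.sum
        intro k _
        simpa using (MvPolynomial.isHomogeneous_X F k).mul
          (MvPolynomial.isHomogeneous_C (Fin d) (b k (σ i) i)))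
    simpa using this
  have h2 : (((Equiv.Perm.sign σ : ℤ) : MvPolynomial (Fin d) F)).IsHomogeneous 0 := by
    rw [show (((Equiv.Perm.sign σ : ℤ) : MvPolynomial (Fin d) F)) =
        C (((Equiv.Perm.sign σ : ℤ) : F)) from (map_intCast (C : F →+* _) _).symm]
    exact MvPolynomial.isHomogeneous_C _ _
  simpa using h2.mul h1


set_option synthInstance.maxHeartbeats 400000 in
set_option maxHeartbeats 1000000 in
lemma mv_eq_zero_of_eval_eq_zero {F : Type*} [Field F] [Fintype F] {d : ℕ}
    (p : MvPolynomial (Fin d) F)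
    (hdeg : p ∈ restrictDegree (Fin d) F (Fintype.card F - 1))
    (h : ∀ v : Fin d → F, eval v p = 0) : p = 0 := by
  classical
  letI : Small.{0} F := Countable.toSmall F
  let e : F ≃ Shrink.{0} F := equivShrink F
  let K : Type := Shrink.{0} F
  letI : Field K := e.symm.field
  letI : Fintype K := Fintype.ofEquiv F e
  have hcard : Fintype.card K = Fintype.card F := (Fintype.card_congr e.symm)
  let φ : K ≃+* F := by exact e.symm.ringEquiv
  let ψ : F →+* K := φ.symm.toRingHom
  have hψφ : ∀ x : K, ψ (φ x) = x := fun x => φ.symm_apply_apply x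
  have key : ∀ (pp : MvPolynomial (Fin d) F) (w : Fin d → K),
      eval w (MvPolynomial.map ψ pp) = ψ (eval (fun i => φ (w i)) pp) := by
    intro pp w
    induction pp using MvPolynomial.induction_on with
    | C a => rw [map_C, eval_C, eval_C]
    | add p q hp hq => simp only [_root_.map_add, hp, hq]
    | mul_X p i hp =>
        simp only [_root_.map_mul, MvPolynomial.map_X, eval_X, hp]
        rw [hψφ]
  have h0 : MvPolynomial.map ψ p = 0 := by
    apply MvPolynomial.eq_zero_of_eval_eq_zero
    · intro w
      rw [key, h, map_zero]
    · rw [mem_restrictDegree] at hdeg ⊢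
      intro s hs i
      rw [hcard]
      exact hdeg s (MvPolynomial.support_map_subset _ _ hs) i
  have hinj : Function.Injective (MvPolynomial.map (σ := Fin d) ψ) :=
    MvPolynomial.map_injective ψ φ.symm.injective
  exact hinj (by rw [h0, map_zero])

set_option maxHeartbeats 1000000 in
theorem stmt0 {F : Type*} [Field F] [Fintype F] {n d : ℕ} (hd : 0 < d)
    (M : Submodule F (Matrix (Fin n) (Fin n) F))
    (b : Module.Basis (Fin d) F M)
    (hdet : ∀ A ∈ M, Matrix.det A = 0)
    (hP : detPoly (fun k => (b k : Matrix (Fin n) (Fin n) F)) ≠ 0) :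
    Fintype.card F < n := by
  classical
  set q := Fintype.card F with hq
  have hq2 : 2 ≤ q := Fintype.one_lt_card
  by_contra hqn
  push_neg at hqn  -- n ≤ q
  set P : MvPolynomial (Fin d) F := detPoly (fun k => (b k : Matrix (Fin n) (Fin n) F))
    with hPdef
  have hhom : P.IsHomogeneous n := detPoly_isHomogeneous _
  -- P vanishes everywhere
  have heval : ∀ v : Fin d → F, eval v P = 0 := by
    intro v
    have h1 : eval v P
        = Matrix.det ((Matrix.of fun i j =>
            ∑ k, X k * C ((b k : Matrix (Fin n) (Fin n) F) i j)).map (eval v)) := by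
      rw [hPdef, detPoly, RingHom.map_det, RingHom.mapMatrix_apply]
    have h2 : ((Matrix.of fun i j => ∑ k, X k * C ((b k : Matrix (Fin n) (Fin n) F) i j)).map
          (eval v)) = ∑ k, v k • (b k : Matrix (Fin n) (Fin n) F) := by
      ext i j
      simp [Matrix.map_apply, Matrix.sum_apply]
    have hmem : (∑ k, v k • (b k : Matrix (Fin n) (Fin n) F)) ∈ M := by
      apply Submodule.sum_mem
      intro k _
      exact Submodule.smul_mem _ _ (b k).2
    rw [h1, h2]
    exact hdet _ hmem
  set c : Fin d → F := fun i => coeff (Finsupp.single i q) P with hc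
  set Q : MvPolynomial (Fin d) F := P - ∑ i, C (c i) * X i ^ q + ∑ i, C (c i) * X i with hQ
  -- Q has degree ≤ q - 1 in each variable
  have hQdeg : Q ∈ restrictDegree (Fin d) F (q - 1) := by
    rw [mem_restrictDegree]
    intro s hs i
    rw [MvPolynomial.mem_support_iff] at hs
    by_contra hlt
    push_neg at hlt
    have hsi : q ≤ s i := by omega
    apply hs
    have hX : ∀ j : Fin d, coeff s (C (c j) * X j) = 0 := by
      intro j
      rw [coeff_C_mul, coeff_X']
      rw [if_neg, mul_zero]
      intro h
      have h2 : s i ≤ 1 := by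
        rw [← h, Finsupp.single_apply]
        split <;> omega
      omega
    have hXq : ∀ j : Fin d,
        coeff s (C (c j) * X j ^ q) = (if s = Finsupp.single j q then c j else 0) := by
      intro j
      rw [coeff_C_mul, coeff_X_pow]
      by_cases h : s = Finsupp.single j q
      · subst h; rw [if_pos rfl, if_pos rfl, mul_one]
      · rw [if_neg (fun hh => h hh.symm), if_neg h, mul_zero]
    rcases eq_or_ne s (Finsupp.single i q) with hsingle | hsingle
    · -- s = single i q : coeff s P = c i cancels against the X^q sum
      have hPc : coeff s P = c i := by rw [hsingle, hc]
      have hcond : ∀ j : Fin d,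
          (if s = Finsupp.single j q then c j else 0) = (if j = i then c i else 0) := by
        intro j
        by_cases h : j = i
        · subst h; rw [if_pos hsingle, if_pos rfl]
        · rw [if_neg h, if_neg]
          intro hh
          rw [hsingle] at hh
          exact h (Finsupp.single_left_injective (by omega) hh.symm)
      rw [hQ, coeff_add, coeff_sub, hPc, coeff_sum, coeff_sum,
        Finset.sum_congr rfl (fun j _ => hXq j), Finset.sum_congr rfl (fun j _ => hX j),
        Finset.sum_congr rfl (fun j _ => hcond j), Finset.sum_ite_eq' Finset.univ i fun _ => c i]
      simp
    · -- otherwise every coefficient vanishes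
      have hPc : coeff s P = 0 := by
        apply hhom.coeff_eq_zero
        intro hdeg
        have h1 := Finsupp.le_degree i s
        apply hsingle
        ext j
        rcases eq_or_ne j i with rfl | hj
        · rw [Finsupp.single_eq_same]; omega
        · rw [Finsupp.single_eq_of_ne' (Ne.symm hj)]
          rcases Nat.eq_zero_or_pos (s j) with h0 | hpos
          · exact h0
          · exfalso
            have hsub : ({i, j} : Finset (Fin d)) ⊆ s.support := by
              intro a ha
              rw [Finset.mem_insert, Finset.mem_singleton] at ha
              rw [Finsupp.mem_support_iff]
              rcases ha with rfl | rfl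
              · omega
              · omega
            have : s i + s j ≤ Finsupp.degree s := by
              rw [Finsupp.degree_apply, ← Finset.sum_pair (Ne.symm hj)]
              exact Finset.sum_le_sum_of_subset hsub
            omega
      have hXq0 : ∀ j : Fin d, (if s = Finsupp.single j q then c j else 0) = 0 := by
        intro j
        rw [if_neg]
        intro hh
        have : s i ≠ 0 := by omega
        have hij : i = j := by
          by_contra hij
          rw [hh, Finsupp.single_eq_of_ne' (fun h => hij h.symm)] at this
          exact this rfl
        exact hsingle (hij ▸ hh)
      rw [hQ, coeff_add, coeff_sub, hPc, coeff_sum, coeff_sum,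
        Finset.sum_congr rfl (fun j _ => hXq j), Finset.sum_congr rfl (fun j _ => hX j),
        Finset.sum_congr rfl (fun j _ => hXq0 j)]
      simp
  -- Q vanishes everywhere, hence Q = 0
  have hQeval : ∀ v : Fin d → F, eval v Q = 0 := by
    intro v
    have h1 : eval v Q = eval v P - ∑ i, c i * (v i) ^ q + ∑ i, c i * v i := by
      simp [hQ]
    rw [h1, heval]
    simp [hq, FiniteField.pow_card]
  have hQ0 : Q = 0 := mv_eq_zero_of_eval_eq_zero Q hQdeg hQeval
  -- hence P = ∑ c i (X i ^ q - X i)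
  have hPid : P = ∑ i, C (c i) * X i ^ q - ∑ i, C (c i) * X i := by
    have := hQ0
    rw [hQ] at this
    linear_combination (norm := ring_nf) this
  -- all c i vanish
  have hcz : ∀ j, c j = 0 := by
    intro j
    rcases eq_or_ne n q with hnq | hne
    · -- n = q ≥ 2 : compare coefficients at single j 1
      have h0 : coeff (Finsupp.single j 1) P = 0 := by
        apply hhom.coeff_eq_zero
        rw [finsupp_degree_single]
        omega
      rw [hPid, coeff_sub, coeff_sum, coeff_sum] at h0
      have hXq0 : ∀ i : Fin d, coeff (Finsupp.single j 1) (C (c i) * X i ^ q) = 0 := by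
        intro i
        rw [coeff_C_mul, coeff_X_pow, if_neg, mul_zero]
        intro hh
        have := congrArg Finsupp.degree hh
        rw [finsupp_degree_single, finsupp_degree_single] at this
        omega
      have hX1 : ∀ i : Fin d,
          coeff (Finsupp.single j 1) (C (c i) * X i) = (if i = j then c i else 0) := by
        intro i
        rw [coeff_C_mul, coeff_X']
        by_cases h : i = j
        · subst h; rw [if_pos rfl, if_pos rfl, mul_one]
        · rw [if_neg (fun hh => h (Finsupp.single_left_injective one_ne_zero hh)),
            if_neg h, mul_zero]
      rw [Finset.sum_congr rfl (fun i _ => hXq0 i), Finset.sum_congr rfl (fun i _ => hX1 i),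
        Finset.sum_ite_eq' Finset.univ j fun i => c i] at h0
      simpa using h0
    · rw [hc]
      apply hhom.coeff_eq_zero
      rw [finsupp_degree_single]
      omega
  apply hP
  rw [hPdef] at hPid ⊢
  rw [hPid]
  simp [hcz]
end

section
/- Let f be a non-constant homogeneous polynomial in F_q[x_1,...,x_d]. If 2d ≥ 1 + deg f and f has no non-trivial zero in F_q^d, then f is irreducible over F_q. -/
open MvPolynomial Finset

section Aux

variable {σ : Type*} {R : Type*} [CommRing R]

private lemma comp_mul_formula (p q : MvPolynomial σ R) (k : ℕ) :
    homogeneousComponent k (p * q) =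
      ∑ ij ∈ (range (p.totalDegree + 1)) ×ˢ (range (q.totalDegree + 1)),
        if ij.1 + ij.2 = k then
          homogeneousComponent ij.1 p * homogeneousComponent ij.2 q else 0 := by
  conv_lhs => rw [← sum_homogeneousComponent p, ← sum_homogeneousComponent q]
  rw [Finset.sum_mul_sum, ← Finset.sum_product', map_sum]
  refine Finset.sum_congr rfl fun ij _ => ?_
  have hmem : (homogeneousComponent ij.1 p * homogeneousComponent ij.2 q)
      ∈ homogeneousSubmodule σ R (ij.1 + ij.2) :=
    (mem_homogeneousSubmodule _ _).mpr
      ((homogeneousComponent_isHomogeneous ij.1 p).mul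
        (homogeneousComponent_isHomogeneous ij.2 q))
  rw [homogeneousComponent_of_mem hmem]
  by_cases hk : k = ij.1 + ij.2 <;> simp [hk, eq_comm]

private lemma factor_homog [NoZeroDivisors R] {n : ℕ} {g h : MvPolynomial σ R}
    (hgh : (g * h).IsHomogeneous n) (hg : g ≠ 0) (hh : h ≠ 0) :
    ∃ a b : ℕ, a + b = n ∧ g.IsHomogeneous a ∧ h.IsHomogeneous b := by
  classical
  set Sg := (range (g.totalDegree + 1)).filter
    (fun i => homogeneousComponent i g ≠ 0) with hSgdef
  set Sh := (range (h.totalDegree + 1)).filter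
    (fun i => homogeneousComponent i h ≠ 0) with hShdef
  have hSgne : Sg.Nonempty := by
    rw [hSgdef, Finset.filter_nonempty_iff]
    by_contra hcon
    push_neg at hcon
    exact hg (by rw [← sum_homogeneousComponent g]; exact Finset.sum_eq_zero hcon)
  have hShne : Sh.Nonempty := by
    rw [hShdef, Finset.filter_nonempty_iff]
    by_contra hcon
    push_neg at hcon
    exact hh (by rw [← sum_homogeneousComponent h]; exact Finset.sum_eq_zero hcon)
  have key : ∀ a ∈ Sg, ∀ b ∈ Sh,
      (∀ i ∈ Sg, ∀ j ∈ Sh, i + j = a + b → i = a ∧ j = b) → a + b = n := by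
    intro a ha b hb hext
    have hcomp : homogeneousComponent (a + b) (g * h) =
        homogeneousComponent a g * homogeneousComponent b h := by
      rw [comp_mul_formula]
      rw [Finset.sum_eq_single_of_mem (a, b)
        (Finset.mem_product.mpr ⟨(Finset.mem_filter.mp ha).1, (Finset.mem_filter.mp hb).1⟩)]
      · simp
      · rintro ⟨i, j⟩ hij hne
        simp only
        split_ifs with hadd
        · by_contra hne0
          have h1 : homogeneousComponent i g ≠ 0 := fun e => hne0 (by rw [e, zero_mul])
          have h2 : homogeneousComponent j h ≠ 0 := fun e => hne0 (by rw [e, mul_zero])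
          have hiS : i ∈ Sg := Finset.mem_filter.mpr ⟨(Finset.mem_product.mp hij).1, h1⟩
          have hjS : j ∈ Sh := Finset.mem_filter.mpr ⟨(Finset.mem_product.mp hij).2, h2⟩
          obtain ⟨hi, hj⟩ := hext i hiS j hjS hadd
          exact hne (Prod.ext hi hj)
        · rfl
    have hne0 : homogeneousComponent (a + b) (g * h) ≠ 0 := by
      rw [hcomp]
      exact mul_ne_zero (Finset.mem_filter.mp ha).2 (Finset.mem_filter.mp hb).2
    by_contra hne
    apply hne0
    rw [homogeneousComponent_of_mem ((mem_homogeneousSubmodule _ _).mpr hgh), if_neg hne]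
  set A := Sg.max' hSgne
  set A' := Sg.min' hSgne
  set B := Sh.max' hShne
  set B' := Sh.min' hShne
  have hAB : A + B = n := by
    refine key A (Sg.max'_mem hSgne) B (Sh.max'_mem hShne) fun i hi j hj hs => ?_
    have h1 := Sg.le_max' i hi
    have h2 := Sh.le_max' j hj
    omega
  have hA'B' : A' + B' = n := by
    refine key A' (Sg.min'_mem hSgne) B' (Sh.min'_mem hShne) fun i hi j hj hs => ?_
    have h1 := Sg.min'_le i hi
    have h2 := Sh.min'_le j hj
    omega
  have hAle := Sg.min'_le A (Sg.max'_mem hSgne)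
  have hBle := Sh.min'_le B (Sh.max'_mem hShne)
  have hAA' : A' = A := by omega
  have hBB' : B' = B := by omega
  have honly : ∀ (S : Finset ℕ) (hS : S.Nonempty), S.min' hS = S.max' hS →
      ∀ i ∈ S, i = S.max' hS := by
    intro S hS he i hi
    have := S.min'_le i hi
    have := S.le_max' i hi
    omega
  have hgA : g = homogeneousComponent A g := by
    conv_lhs => rw [← sum_homogeneousComponent g]
    refine Finset.sum_eq_single_of_mem A (Finset.mem_filter.mp (Sg.max'_mem hSgne)).1
      fun i hi hne => ?_
    by_contra h0
    exact hne (honly Sg hSgne hAA' i (Finset.mem_filter.mpr ⟨hi, h0⟩))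
  have hhB : h = homogeneousComponent B h := by
    conv_lhs => rw [← sum_homogeneousComponent h]
    refine Finset.sum_eq_single_of_mem B (Finset.mem_filter.mp (Sh.max'_mem hShne)).1
      fun i hi hne => ?_
    by_contra h0
    exact hne (honly Sh hShne hBB' i (Finset.mem_filter.mpr ⟨hi, h0⟩))
  exact ⟨A, B, hAB, hgA ▸ homogeneousComponent_isHomogeneous A g,
    hhB ▸ homogeneousComponent_isHomogeneous B h⟩

private lemma homog_zero_isUnit {K : Type*} [Field K] {g : MvPolynomial σ K}
    (hg : g.IsHomogeneous 0) (h0 : g ≠ 0) : IsUnit g := by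
  have hC : g = C (coeff 0 g) := by
    ext d
    rcases eq_or_ne d 0 with rfl | hd
    · simp
    · classical
      rw [hg.coeff_eq_zero (by rwa [Ne, Finsupp.degree_eq_zero_iff]), coeff_C,
        if_neg (fun e => hd e.symm)]
  have hc : coeff 0 g ≠ 0 := fun e => h0 (by rw [hC, e, map_zero])
  rw [hC]
  exact (isUnit_iff_ne_zero.mpr hc).map (C : K →+* MvPolynomial σ K)

private lemma eval_zero_of_homog {K : Type*} [CommRing K] {g : MvPolynomial σ K} {p : ℕ}
    (hp : 0 < p) (hg : g.IsHomogeneous p) : eval (0 : σ → K) g = 0 := by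
  rw [eval_zero, constantCoeff_eq]
  exact hg.coeff_eq_zero (by rw [map_zero]; exact hp.ne)

private lemma exists_nontrivial_zero {F : Type*} [Field F] [Fintype F] {d p : ℕ}
    (hp : 0 < p) (hpd : p < d) {g : MvPolynomial (Fin d) F}
    (hg : g.IsHomogeneous p) : ∃ v : Fin d → F, v ≠ 0 ∧ eval v g = 0 := by
  classical
  obtain ⟨c, hc⟩ := CharP.exists F
  have hcp : c.Prime := CharP.char_is_prime F c
  have hdvd : c ∣ Fintype.card { x : Fin d → F // eval x g = 0 } :=
    char_dvd_card_solutions c (lt_of_le_of_lt hg.totalDegree_le (by simpa using hpd))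
  have h0 : eval (0 : Fin d → F) g = 0 := eval_zero_of_homog hp hg
  by_contra hcon
  push_neg at hcon
  have hcard : Fintype.card { x : Fin d → F // eval x g = 0 } = 1 := by
    refine Fintype.card_eq_one_iff.mpr ⟨⟨0, h0⟩, ?_⟩
    rintro ⟨x, hx⟩
    refine Subtype.ext ?_
    by_contra hne
    exact hcon x (by simpa using hne) hx
  rw [hcard] at hdvd
  exact hcp.one_lt.ne' (Nat.dvd_one.mp hdvd)

end Aux

theorem stmt2 {F : Type*} [Field F] [Fintype F] {d n : ℕ} (hn : 0 < n)
    (f : MvPolynomial (Fin d) F) (hf : f.IsHomogeneous n) (hf0 : f ≠ 0)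
    (hdeg : 2 * d ≥ 1 + n)
    (hz : ∀ v : Fin d → F, v ≠ 0 → eval v f ≠ 0) :
    Irreducible f := by
  constructor
  · intro hu
    have h0 : eval (0 : Fin d → F) f = 0 := eval_zero_of_homog hn hf
    have := hu.map (eval (0 : Fin d → F))
    rw [h0] at this
    exact not_isUnit_zero this
  · intro a b hab
    by_contra hcon
    push_neg at hcon
    obtain ⟨hua, hub⟩ := hcon
    have ha0 : a ≠ 0 := fun e => hf0 (by rw [hab, e, zero_mul])
    have hb0 : b ≠ 0 := fun e => hf0 (by rw [hab, e, mul_zero])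
    have hab' : (a * b).IsHomogeneous n := hab ▸ hf
    obtain ⟨p, q, hpq, hap, hbq⟩ := factor_homog hab' ha0 hb0
    have hp1 : 0 < p := by
      rcases Nat.eq_zero_or_pos p with e | h
      · exact absurd (homog_zero_isUnit (e ▸ hap) ha0) hua
      · exact h
    have hq1 : 0 < q := by
      rcases Nat.eq_zero_or_pos q with e | h
      · exact absurd (homog_zero_isUnit (e ▸ hbq) hb0) hub
      · exact h
    rcases le_total p q with hle | hle
    · obtain ⟨v, hv, hev⟩ := exists_nontrivial_zero hp1 (by omega) hap
      exact hz v hv (by rw [hab, map_mul, hev, zero_mul])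
    · obtain ⟨v, hv, hev⟩ := exists_nontrivial_zero hq1 (by omega) hbq
      exact hz v hv (by rw [hab, map_mul, hev, mul_zero])
end

section
/- Let K be a field and M a subspace of M_n(K) such that the set M_0 of elements of M with determinant zero is a linear subspace of M of codimension n in M. Then M_0 = {0}, i.e., every non-zero element of M has non-zero determinant. -/
set_option synthInstance.maxHeartbeats 400000
set_option maxHeartbeats 800000

theorem stmt7 {K : Type*} [Field K] {n : ℕ}
    (M M₀ : Submodule K (Matrix (Fin n) (Fin n) K))
    (hmem : ∀ A, A ∈ M₀ ↔ A ∈ M ∧ Matrix.det A = 0)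
    (hcodim : Module.finrank K M = Module.finrank K M₀ + n) :
    M₀ = ⊥ := by
  have hle : M₀ ≤ M := fun A hA => ((hmem A).1 hA).1
  -- M₀ viewed inside M
  set M₀' : Submodule K M := M₀.comap M.subtype with hM₀'
  have hfr : Module.finrank K M₀' = Module.finrank K M₀ :=
    (Submodule.comapSubtypeEquivOfLe hle).finrank_eq
  -- key: for each nonzero v, the kernel of evaluation equals M₀'
  have key : ∀ v : Fin n → K, v ≠ 0 →
      ∀ A : M, A ∈ M₀' → (A : Matrix (Fin n) (Fin n) K).mulVec v = 0 := by
    intro v hv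
    set f : M →ₗ[K] (Fin n → K) :=
      { toFun := fun A => (A : Matrix (Fin n) (Fin n) K).mulVec v
        map_add' := by intro A B; simp [Matrix.add_mulVec]
        map_smul' := by intro c A; simp [Matrix.smul_mulVec] } with hf
    have hker : LinearMap.ker f ≤ M₀' := by
      intro A hA
      have : (A : Matrix (Fin n) (Fin n) K).mulVec v = 0 := hA
      refine (hmem A).2 ⟨A.2, ?_⟩
      exact Matrix.exists_mulVec_eq_zero_iff.mp ⟨v, hv, this⟩
    have hrange : Module.finrank K (LinearMap.range f) ≤ n := by
      simpa using (Submodule.finrank_le (LinearMap.range f))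
    have hrn := LinearMap.finrank_range_add_finrank_ker f
    have hge : Module.finrank K M₀ ≤ Module.finrank K (LinearMap.ker f) := by omega
    have heq : LinearMap.ker f = M₀' := by
      apply Submodule.eq_of_le_of_finrank_le hker
      omega
    intro A hA
    have : A ∈ LinearMap.ker f := heq ▸ hA
    exact this
  ext A
  simp only [Submodule.mem_bot]
  constructor
  · intro hA
    have hA' : A ∈ M := hle hA
    ext i j
    have := key (Pi.single j 1) (by simp [Pi.single_eq_same, Function.ne_iff]) ⟨A, hA'⟩ ((hmem A).2 ⟨hA', ((hmem A).1 hA).2⟩)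
    have := congrFun this i
    simpa [Matrix.mulVec_single] using this
  · rintro rfl; exact M₀.zero_mem
end

section
/- For every positive integer d and n = 2d+1, there exists a d-dimensional subspace M of M_n(F_q) such that every non-zero element of M has non-zero determinant, yet for all A, B in M with A invertible, the characteristic polynomial of A^{-1}B is reducible over F_q. -/
open Polynomial Matrix

/-- Over a finite field `F`, for every `t ≠ 0` there is a field extension of degree `t`. -/
private lemma stmt8_exists_ext (F : Type*) [Field F] [Fintype F] (t : ℕ) (ht : t ≠ 0) :
    ∃ (K : Type) (_ : Field K) (_ : Algebra F K),
      Finite K ∧ Module.finrank F K = t := by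
  set p := ringChar F with hpdef
  haveI : CharP F p := ringChar.charP F
  obtain ⟨m, hp, hF⟩ := FiniteField.card F p
  haveI : Fact p.Prime := ⟨hp⟩
  haveI : Algebra (ZMod p) F := ZMod.algebra F p
  let K := GaloisField p ((m : ℕ) * t)
  haveI : Fintype K := Fintype.ofFinite K
  have hmt : (m : ℕ) * t ≠ 0 := Nat.mul_ne_zero m.pos.ne' ht
  have hcardK : Fintype.card K = p ^ ((m : ℕ) * t) := by
    have := GaloisField.card p ((m : ℕ) * t) hmt
    rwa [Nat.card_eq_fintype_card] at this
  haveI : IsSplittingField (ZMod p) F (X ^ p ^ (m : ℕ) - X) :=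
    FiniteField.isSplittingField_of_card_eq _ _ hF
  have h1 : ∀ a : ℕ, 1 ≤ a → (X ^ a - X : (ZMod p)[X]) = X * (X ^ (a - 1) - 1) := by
    intro a ha
    rw [mul_sub, mul_one, ← pow_succ', Nat.sub_add_cancel ha]
  have key : (X ^ p ^ (m : ℕ) - X : (ZMod p)[X]) ∣ X ^ p ^ ((m : ℕ) * t) - X := by
    rw [h1 _ (Nat.one_le_pow _ _ hp.pos), h1 _ (Nat.one_le_pow _ _ hp.pos)]
    refine mul_dvd_mul_left _ ?_
    obtain ⟨c, hc⟩ := Nat.sub_dvd_pow_sub_pow (p ^ (m : ℕ)) 1 t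
    rw [one_pow] at hc
    have h2 : p ^ ((m : ℕ) * t) - 1 = (p ^ (m : ℕ) - 1) * c := by
      rw [pow_mul]; exact hc
    have h3 : (X ^ (p ^ (m : ℕ) - 1) - 1 : (ZMod p)[X]) ∣
        (X ^ (p ^ (m : ℕ) - 1)) ^ c - 1 ^ c := sub_dvd_pow_sub_pow _ _ c
    rwa [one_pow, ← pow_mul, ← h2] at h3
  have hsplK : Splits ((X ^ p ^ (m : ℕ) - X : (ZMod p)[X]).map (algebraMap (ZMod p) K)) := by
    refine Splits.of_dvd ?_
      (Polynomial.map_ne_zero (FiniteField.X_pow_card_pow_sub_X_ne_zero _ hmt hp.one_lt))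
      (Polynomial.map_dvd _ key)
    have := FiniteField.splits_X_pow_card_sub_X (p := p) (K := K)
    rwa [hcardK] at this
  let emb : F →ₐ[ZMod p] K := IsSplittingField.lift F (X ^ p ^ (m : ℕ) - X) hsplK
  letI : Algebra F K := (emb.toRingHom).toAlgebra
  refine ⟨K, inferInstance, inferInstance, inferInstance, ?_⟩
  haveI : Module.Finite F K := Module.Finite.of_finite
  have h2 : Fintype.card K = Fintype.card F ^ Module.finrank F K := Module.card_eq_pow_finrank
  rw [hcardK, hF, ← pow_mul] at h2
  have h3 := Nat.pow_right_injective hp.two_le h2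
  exact (Nat.eq_of_mul_eq_mul_left m.pos h3).symm

/-- For `s ≤ t`, `t ≠ 0`, there is an injective linear map from `F^s` into `t × t` matrices
whose nonzero values are invertible. -/
private lemma stmt8_good_space (F : Type*) [Field F] [Fintype F] (s t : ℕ) (hst : s ≤ t)
    (ht : t ≠ 0) :
    ∃ f : (Fin s → F) →ₗ[F] Matrix (Fin t) (Fin t) F,
      Function.Injective f ∧ ∀ x : Fin s → F, x ≠ 0 → IsUnit (f x).det := by
  obtain ⟨K, _, _, _, hK⟩ := stmt8_exists_ext F t ht
  haveI : Module.Finite F K := Module.Finite.of_finite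
  let b : Module.Basis (Fin t) F K := Module.finBasisOfFinrankEq F K hK
  let v : Fin s → K := fun i => b (Fin.castLE hst i)
  have hv : LinearIndependent F v :=
    b.linearIndependent.comp _ (Fin.castLE_injective hst)
  let g : (Fin s → F) →ₗ[F] K :=
    { toFun := fun x => ∑ i, x i • v i
      map_add' := by
        intro x y
        simp [add_smul, Finset.sum_add_distrib]
      map_smul' := by
        intro c x
        simp [smul_smul, Finset.smul_sum] }
  have hg : Function.Injective g := by
    rw [injective_iff_map_eq_zero]
    intro x hx
    have := (Fintype.linearIndependent_iff.mp hv) x hx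
    funext i
    exact this i
  refine ⟨(Algebra.leftMulMatrix b).toLinearMap.comp g, ?_, ?_⟩
  · exact (Algebra.leftMulMatrix_injective b).comp hg
  · intro x hx
    have hgx : g x ≠ 0 := fun h => hx (hg (by simpa using h))
    have : IsUnit (g x) := isUnit_iff_ne_zero.mpr hgx
    have : IsUnit (Algebra.leftMulMatrix b (g x)) := this.map (Algebra.leftMulMatrix b)
    exact (Matrix.isUnit_iff_isUnit_det _).mp this

theorem stmt8 {F : Type*} [Field F] [Fintype F] (d : ℕ) (hd : 0 < d) :
    ∃ M : Submodule F (Matrix (Fin (2 * d + 1)) (Fin (2 * d + 1)) F),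
      Module.finrank F M = d ∧
      (∀ A ∈ M, A ≠ 0 → Matrix.det A ≠ 0) ∧
      (∀ A ∈ M, ∀ B ∈ M, Matrix.det A ≠ 0 →
        ¬ Irreducible (Matrix.charpoly (A⁻¹ * B))) := by
  obtain ⟨f₁, hf₁inj, hf₁⟩ := stmt8_good_space F d d le_rfl hd.ne'
  obtain ⟨f₂, hf₂inj, hf₂⟩ := stmt8_good_space F d (d + 1) (Nat.le_succ d) (Nat.succ_ne_zero d)
  let e : Fin d ⊕ Fin (d + 1) ≃ Fin (2 * d + 1) :=
    finSumFinEquiv.trans (finCongr (by omega))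
  let blocks : (Fin d → F) →ₗ[F] Matrix (Fin d ⊕ Fin (d + 1)) (Fin d ⊕ Fin (d + 1)) F :=
    { toFun := fun x => Matrix.fromBlocks (f₁ x) 0 0 (f₂ x)
      map_add' := by
        intro x y
        simp [Matrix.fromBlocks_add]
      map_smul' := by
        intro c x
        simp [Matrix.fromBlocks_smul] }
  let L : (Fin d → F) →ₗ[F] Matrix (Fin (2 * d + 1)) (Fin (2 * d + 1)) F :=
    (Matrix.reindexLinearEquiv F F e e).toLinearMap.comp blocks
  have hLval : ∀ x, L x = Matrix.reindex e e (Matrix.fromBlocks (f₁ x) 0 0 (f₂ x)) := by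
    intro x; rfl
  have hLinj : Function.Injective L := by
    intro x y hxy
    rw [hLval, hLval] at hxy
    have h1 : Matrix.fromBlocks (f₁ x) 0 0 (f₂ x) =
        Matrix.fromBlocks (f₁ y) (0 : Matrix (Fin d) (Fin (d+1)) F) 0 (f₂ y) :=
      (Matrix.reindex e e).injective hxy
    have h2 := congrArg Matrix.toBlocks₁₁ h1
    simp only [Matrix.toBlocks_fromBlocks₁₁] at h2
    exact hf₁inj h2
  refine ⟨LinearMap.range L, ?_, ?_, ?_⟩
  · rw [LinearMap.finrank_range_of_inj hLinj, Module.finrank_fin_fun]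
  · rintro A ⟨x, rfl⟩ hA
    have hx : x ≠ 0 := by rintro rfl; exact hA (map_zero L)
    rw [hLval, Matrix.det_reindex_self, Matrix.det_fromBlocks_zero₂₁]
    exact (((hf₁ x hx).mul (hf₂ x hx)).ne_zero)
  · rintro A ⟨x, rfl⟩ B ⟨y, rfl⟩ hdet
    have hx : x ≠ 0 := by
      rintro rfl
      rw [map_zero] at hdet
      exact hdet (by simp)
    have h₁ : IsUnit (f₁ x).det := hf₁ x hx
    have h₂ : IsUnit (f₂ x).det := hf₂ x hx
    have hAdet : IsUnit (L x).det := by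
      rw [hLval, Matrix.det_reindex_self, Matrix.det_fromBlocks_zero₂₁]
      exact h₁.mul h₂
    haveI : Invertible (L x) := (L x).invertibleOfIsUnitDet hAdet
    have hinv : (L x)⁻¹ * L y =
        Matrix.reindex e e
          (Matrix.fromBlocks ((f₁ x)⁻¹ * f₁ y) 0 0 ((f₂ x)⁻¹ * f₂ y)) := by
      rw [Matrix.inv_mul_eq_iff_eq_mul_of_invertible]
      rw [hLval, hLval]
      simp only [Matrix.reindex_apply]
      rw [Matrix.submatrix_mul_equiv, Matrix.fromBlocks_multiply]
      simp only [Matrix.mul_zero, Matrix.zero_mul, add_zero, zero_add,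
        Matrix.mul_nonsing_inv_cancel_left _ _ h₁,
        Matrix.mul_nonsing_inv_cancel_left _ _ h₂]
    rw [hinv, Matrix.reindex_apply, ← Matrix.charpoly_reindex e.symm, Matrix.reindex_apply]
    intro hirr
    have hchar : Matrix.charpoly
        (Matrix.fromBlocks ((f₁ x)⁻¹ * f₁ y) (0 : Matrix (Fin d) (Fin (d+1)) F) 0
          ((f₂ x)⁻¹ * f₂ y)) =
        Matrix.charpoly ((f₁ x)⁻¹ * f₁ y) * Matrix.charpoly ((f₂ x)⁻¹ * f₂ y) :=
      Matrix.charpoly_fromBlocks_zero₂₁ _ _ _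
    rw [show ((Matrix.fromBlocks ((f₁ x)⁻¹ * f₁ y) 0 0 ((f₂ x)⁻¹ * f₂ y)).submatrix
        ⇑e.symm ⇑e.symm).submatrix ⇑e.symm.symm ⇑e.symm.symm =
        Matrix.fromBlocks ((f₁ x)⁻¹ * f₁ y) 0 0 ((f₂ x)⁻¹ * f₂ y) by
      simp [Matrix.submatrix_submatrix]] at hirr
    rw [hchar] at hirr
    rcases hirr.isUnit_or_isUnit rfl with h | h
    · exact Polynomial.not_isUnit_of_natDegree_pos _
        (by rw [Matrix.charpoly_natDegree_eq_dim]; simpa using hd) h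
    · exact Polynomial.not_isUnit_of_natDegree_pos _
        (by rw [Matrix.charpoly_natDegree_eq_dim]; simp) h
end

section
/- Let K be a field, L a degree-3 Galois extension of K with Galois group generated by σ. Consider the set N of K-linear endomorphisms T_{a,b} of L given by T_{a,b}(z) = a(σ²(z) − σ(z)) + b·z, where a ranges over K and b ranges over elements of L of trace zero. Then N is a 3-dimensional K-subspace of End_K(L), and the non-invertible elements of N are exactly the K-multiples of σ² − σ; these form a one-dimensional subspace whose non-zero elements have rank 2. -/
open Module LinearMap

private lemma aux_field {L : Type*} [Field L] {a b b1 b2 u v w : L}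
    (ht : b + b1 + b2 = 0)
    (h1 : a * (w - v) + b * u = 0)
    (h2 : a * (u - w) + b1 * v = 0)
    (h3 : a * (v - u) + b2 * w = 0)
    (hb : b ≠ 0) (hb1 : b1 ≠ 0) (hb2 : b2 ≠ 0) : w = 0 := by
  have key : b * b * b1 * b2 * w = 0 := by
    linear_combination (a*b*(b1+a))*h1 + (-(a*(b-a)*b))*h2 + ((a^2+b*b1)*b)*h3
      + (-(w*a^2*b))*ht
  simpa [mul_eq_zero, hb, hb1, hb2] using key

theorem stmt9 {K L : Type*} [Field K] [Field L] [Algebra K L] [IsGalois K L]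
    (hdim : Module.finrank K L = 3) (σ : L ≃ₐ[K] L)
    (hgen : ∀ τ : L ≃ₐ[K] L, τ ∈ Subgroup.zpowers σ) :
    ∃ N : Submodule K (L →ₗ[K] L),
      (↑N = {T : L →ₗ[K] L | ∃ a : K, ∃ b : L, b + σ b + σ (σ b) = 0 ∧
        T = a • (σ.toLinearMap ∘ₗ σ.toLinearMap - σ.toLinearMap) +
          LinearMap.mulLeft K b}) ∧
      Module.finrank K N = 3 ∧
      (∀ T ∈ N, ¬ Function.Bijective T ↔
        ∃ a : K, T = a • (σ.toLinearMap ∘ₗ σ.toLinearMap - σ.toLinearMap)) ∧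
      (∀ a : K, a ≠ 0 →
        Module.finrank K
          (LinearMap.range (a • (σ.toLinearMap ∘ₗ σ.toLinearMap - σ.toLinearMap))) = 2) := by
  classical
  haveI hFD : FiniteDimensional K L := FiniteDimensional.of_finrank_pos (by omega)
  set D : L →ₗ[K] L := σ.toLinearMap ∘ₗ σ.toLinearMap - σ.toLinearMap with hDdef
  have hD : ∀ z : L, D z = σ (σ z) - σ z := fun z => rfl
  -- order of σ is 3
  have horder : orderOf σ = 3 := by
    have h1 : Subgroup.zpowers σ = ⊤ := by
      rw [Subgroup.eq_top_iff']; exact hgen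
    have h2 : Nat.card (L ≃ₐ[K] L) = 3 := by
      rw [IsGalois.card_aut_eq_finrank K L, hdim]
    rw [← Nat.card_zpowers, h1, ← h2]
    exact Subgroup.card_top
  have hσ3 : ∀ z : L, σ (σ (σ z)) = z := by
    intro z
    have h : σ ^ 3 = 1 := by rw [← horder]; exact pow_orderOf_eq_one σ
    have := DFunLike.congr_fun h z
    simpa [pow_succ, AlgEquiv.mul_apply] using this
  have hσne : ∃ x : L, σ x ≠ x := by
    by_contra h
    push_neg at h
    have : σ = 1 := AlgEquiv.ext h
    rw [this, orderOf_one] at horder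
    omega
  -- fixed points are in the base field
  have hfix : ∀ z : L, σ z = z → ∃ c : K, algebraMap K L c = z := by
    intro z hz
    have hpow : ∀ m : ℕ, (σ ^ m) z = z := by
      intro m
      induction m with
      | zero => simp
      | succ k ih => rw [pow_succ, AlgEquiv.mul_apply, hz, ih]
    have hall : ∀ τ : L ≃ₐ[K] L, τ z = z := by
      intro τ
      obtain ⟨n, rfl⟩ := hgen τ
      obtain ⟨m, rfl | rfl⟩ := Int.eq_nat_or_neg n
      · simp only [zpow_natCast]; exact hpow m
      · simp only [zpow_neg, zpow_natCast]
        apply (σ ^ m).injective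
        rw [← AlgEquiv.mul_apply, mul_inv_cancel, AlgEquiv.one_apply, hpow m]
    have hmem : z ∈ IntermediateField.fixedField (⊤ : Subgroup (L ≃ₐ[K] L)) :=
      fun g => hall g
    rw [show (⊤ : Subgroup (L ≃ₐ[K] L)) =
        IntermediateField.fixingSubgroup (⊥ : IntermediateField K L) from
        (IntermediateField.fixingSubgroup_bot).symm,
      IsGalois.fixedField_fixingSubgroup] at hmem
    exact IntermediateField.mem_bot.mp hmem
  -- kernel of D
  have hkerD : LinearMap.ker D = LinearMap.range (Algebra.linearMap K L) := by
    ext z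
    simp only [LinearMap.mem_ker, LinearMap.mem_range, Algebra.linearMap_apply, hD,
      sub_eq_zero]
    constructor
    · intro h
      exact hfix z (σ.injective h)
    · rintro ⟨c, rfl⟩
      simp [AlgEquiv.commutes]
  have hFr : Module.finrank K (LinearMap.range (Algebra.linearMap K L)) = 1 := by
    rw [LinearMap.finrank_range_of_inj (algebraMap K L).injective, finrank_self]
  have hkerrank : Module.finrank K (LinearMap.ker D) = 1 := by rw [hkerD, hFr]
  have hDrank : Module.finrank K (LinearMap.range D) = 2 := by
    have := D.finrank_range_add_finrank_ker
    rw [hdim, hkerrank] at this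
    omega
  have hDne : D ≠ 0 := by
    obtain ⟨x, hx⟩ := hσne
    intro h
    apply hx
    have : D x = 0 := by rw [h]; rfl
    rw [hD, sub_eq_zero] at this
    exact σ.injective this
  -- range of a • D
  have hsmulrange : ∀ a : K, a ≠ 0 → LinearMap.range (a • D) = LinearMap.range D := by
    intro a ha
    ext y
    simp only [LinearMap.mem_range, LinearMap.smul_apply]
    constructor
    · rintro ⟨x, rfl⟩
      exact ⟨a • x, by rw [map_smul]⟩
    · rintro ⟨x, rfl⟩
      exact ⟨a⁻¹ • x, by rw [map_smul, smul_smul, mul_inv_cancel₀ ha, one_smul]⟩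
  -- trace map
  set TrL : L →ₗ[K] L :=
    LinearMap.id + σ.toLinearMap + (σ.toLinearMap ∘ₗ σ.toLinearMap) with hTrdef
  have hTr : ∀ z : L, TrL z = z + σ z + σ (σ z) := fun z => rfl
  have hTrne : ∃ z : L, z + σ z + σ (σ z) ≠ 0 := by
    by_contra h
    push_neg at h
    have hLI : LinearIndependent L (fun f : L →* L => (f : L → L)) :=
      linearIndependent_monoidHom L L
    set F : Fin 3 → (L →* L) := fun i =>
      ((σ ^ (i : ℕ)).toAlgHom.toRingHom : L →* L) with hF
    have hFapp : ∀ (i : Fin 3) (x : L), F i x = (σ ^ (i : ℕ)) x := fun i x => rfl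
    have hFinj : Function.Injective F := by
      intro i j hij
      have heq : σ ^ (i : ℕ) = σ ^ (j : ℕ) := by
        apply AlgEquiv.ext; intro x
        have := DFunLike.congr_fun hij x
        simpa only [hFapp] using this
      exact Fin.ext (pow_injOn_Iio_orderOf (x := σ) (by rw [horder]; exact i.is_lt)
        (by rw [horder]; exact j.is_lt) heq)
    have hLI2 := hLI.comp F hFinj
    have hsum : ∑ i : Fin 3, (fun _ : Fin 3 => (1 : L)) i •
        ((fun f : L →* L => (f : L → L)) ∘ F) i = 0 := by
      funext x
      simp only [Finset.sum_apply, Pi.smul_apply, one_smul, Function.comp_apply,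
        Fin.sum_univ_three, Pi.zero_apply, hFapp]
      have e0 : ((0 : Fin 3) : ℕ) = 0 := rfl
      have e1 : ((1 : Fin 3) : ℕ) = 1 := rfl
      have e2 : ((2 : Fin 3) : ℕ) = 2 := rfl
      rw [e0, e1, e2, pow_zero, pow_one]
      have e3 : (σ ^ 2) x = σ (σ x) := by
        rw [pow_two, AlgEquiv.mul_apply]
      rw [e3, AlgEquiv.one_apply]
      exact h x
    have h1 := Fintype.linearIndependent_iff.mp hLI2 (fun _ => (1 : L)) hsum 0
    exact one_ne_zero h1
  have hTrrange : LinearMap.range TrL ≤ LinearMap.ker D := by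
    rintro y ⟨z, rfl⟩
    simp only [LinearMap.mem_ker, hD, hTr, map_add, hσ3, sub_eq_zero]
    ring
  have hTrrank : Module.finrank K (LinearMap.range TrL) = 1 := by
    obtain ⟨z₀, hz₀⟩ := hTrne
    have hle : Module.finrank K (LinearMap.range TrL) ≤ 1 :=
      hkerrank ▸ Submodule.finrank_mono hTrrange
    have hne : LinearMap.range TrL ≠ ⊥ := by
      intro h
      apply hz₀
      have : TrL z₀ ∈ LinearMap.range TrL := ⟨z₀, rfl⟩
      rw [h, Submodule.mem_bot] at this
      rw [← hTr]; exact this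
    have h0 : Module.finrank K (LinearMap.range TrL) ≠ 0 := fun h =>
      hne (Submodule.finrank_eq_zero.mp h)
    omega
  have hWrank : Module.finrank K (LinearMap.ker TrL) = 2 := by
    have := TrL.finrank_range_add_finrank_ker
    rw [hdim, hTrrank] at this
    omega
  -- multiplication operator
  set Lmul : L →ₗ[K] (L →ₗ[K] L) := (Algebra.lmul K L).toLinearMap with hLmuldef
  have hLmulapply : ∀ b : L, Lmul b = LinearMap.mulLeft K b := by
    intro b; ext x; rfl
  have hLmulinj : Function.Injective Lmul := by
    intro b c h
    have := DFunLike.congr_fun h (1 : L)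
    simpa only [hLmulapply, LinearMap.mulLeft_apply, mul_one] using this
  set M : Submodule K (L →ₗ[K] L) := (LinearMap.ker TrL).map Lmul with hMdef
  have hMrank : Module.finrank K M = 2 := by
    rw [← hWrank]
    exact (Submodule.equivMapOfInjective Lmul hLmulinj (LinearMap.ker TrL)).finrank_eq.symm
  set S : Submodule K (L →ₗ[K] L) := K ∙ D with hSdef
  have hSrank : Module.finrank K S = 1 := finrank_span_singleton hDne
  have hD1 : D 1 = 0 := by rw [hD]; simp
  have hdisj : S ⊓ M = ⊥ := by
    rw [eq_bot_iff]
    rintro T ⟨hTS, hTM⟩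
    obtain ⟨a, rfl⟩ := Submodule.mem_span_singleton.mp hTS
    obtain ⟨b, _, hbT⟩ := Submodule.mem_map.mp hTM
    have hb0 : b = 0 := by
      have := DFunLike.congr_fun hbT (1 : L)
      simp only [hLmulapply, LinearMap.mulLeft_apply, mul_one, LinearMap.smul_apply, hD1,
        smul_zero] at this
      exact this
    rw [Submodule.mem_bot, ← hbT, hb0, map_zero]
  set N : Submodule K (L →ₗ[K] L) := S ⊔ M with hNdef
  have hNrank : Module.finrank K N = 3 := by
    have := Submodule.finrank_sup_add_finrank_inf_eq S M
    rw [hdisj, hSrank, hMrank, ← hNdef] at this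
    rw [finrank_bot] at this
    omega
  have hcar : (N : Set (L →ₗ[K] L)) = {T : L →ₗ[K] L | ∃ a : K, ∃ b : L,
      b + σ b + σ (σ b) = 0 ∧ T = a • D + LinearMap.mulLeft K b} := by
    ext T
    simp only [SetLike.mem_coe, Set.mem_setOf_eq]
    constructor
    · intro hT
      rcases Submodule.mem_sup.mp hT with ⟨y, hy, z, hz, rfl⟩
      rcases Submodule.mem_span_singleton.mp hy with ⟨a, rfl⟩
      rcases Submodule.mem_map.mp hz with ⟨b, hb, rfl⟩
      refine ⟨a, b, ?_, by rw [hLmulapply]⟩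
      simpa only [LinearMap.mem_ker, hTr] using hb
    · rintro ⟨a, b, hb, rfl⟩
      refine Submodule.add_mem_sup (Submodule.mem_span_singleton.mpr ⟨a, rfl⟩)
        (Submodule.mem_map.mpr ⟨b, ?_, hLmulapply b⟩)
      simpa only [LinearMap.mem_ker, hTr] using hb
  have hbij : ∀ T ∈ N, ¬ Function.Bijective T ↔ ∃ a : K, T = a • D := by
    intro T hT
    have hT' : T ∈ (N : Set (L →ₗ[K] L)) := hT
    rw [hcar] at hT'
    obtain ⟨a, b, hb, rfl⟩ := hT'
    constructor
    · intro hnb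
      by_cases hb0 : b = 0
      · refine ⟨a, ?_⟩
        rw [hb0]
        simp [LinearMap.mulLeft_zero_eq_zero]
      · exfalso
        apply hnb
        have hinj : Function.Injective (a • D + LinearMap.mulLeft K b) := by
          rw [← LinearMap.ker_eq_bot]
          rw [LinearMap.ker_eq_bot']
        -- injectivity computation
          intro z hz
          have h0 : algebraMap K L a * (σ (σ z) - σ z) + b * z = 0 := by
            have := hz
            simp only [LinearMap.add_apply, LinearMap.smul_apply, hD,
              LinearMap.mulLeft_apply] at this
            rw [← Algebra.smul_def]
            exact this
          have hsa : σ (algebraMap K L a) = algebraMap K L a := σ.commutes a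
          have h1 : algebraMap K L a * (σ (σ z) - σ z) + b * z = 0 := h0
          have h2 : algebraMap K L a * (z - σ (σ z)) + σ b * σ z = 0 := by
            have := congrArg σ h1
            simpa only [map_add, map_mul, map_sub, map_zero, hsa, hσ3] using this
          have h3 : algebraMap K L a * (σ z - z) + σ (σ b) * σ (σ z) = 0 := by
            have := congrArg σ h2
            simpa only [map_add, map_mul, map_sub, map_zero, hsa, hσ3] using this
          have hbne1 : σ b ≠ 0 := fun h => hb0 (σ.injective (h.trans (map_zero σ).symm))
          have hbne2 : σ (σ b) ≠ 0 := fun h =>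
            hbne1 (σ.injective (h.trans (map_zero σ).symm))
          have hw : σ (σ z) = 0 :=
            aux_field hb h1 h2 h3 hb0 hbne1 hbne2
          have hfin : σ (σ (σ z)) = σ 0 := congrArg σ hw
          rw [hσ3, map_zero] at hfin
          exact hfin
        exact ⟨hinj, (LinearMap.injective_iff_surjective).mp hinj⟩
    · rintro ⟨a', h⟩ hbj
      rw [h] at hbj
      have h1 : (a' • D) 1 = 0 := by
        simp [LinearMap.smul_apply, hD1]
      have h2 : (a' • D) (0 : L) = 0 := map_zero _
      exact one_ne_zero (hbj.injective (h1.trans h2.symm))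
  exact ⟨N, hcar, hNrank, hbij, fun a ha => by rw [hsmulrange a ha]; exact hDrank⟩
end

section
/- Let K be a field of characteristic 2 and L a degree-4 cyclic Galois extension of K with Galois group generated by σ. Consider the K-linear maps T_{a,c}: L → L defined by T_{a,c}(z) = a·σ²(z) + (a+c)·z, where a ∈ K and c ∈ L has trace zero. Then: (i) for a ≠ 0, T_{a,0} has rank 2 and satisfies T_{a,0}² = 0 (is nilpotent); (ii) for c ≠ 0, T_{a,c} is invertible. Hence the set of these maps is a 4-dimensional subspace of End_K(L) whose elements of determinant zero form a one-dimensional subspace. -/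
/-- The map `T_{a,c} : z ↦ a·σ²(z) + (a+c)·z` on a quartic extension `L/K`. -/
noncomputable def T10 {K L : Type*} [Field K] [Field L] [Algebra K L]
    (σ : L ≃ₐ[K] L) (a : K) (c : L) : L →ₗ[K] L :=
  a • (σ.toLinearMap ∘ₗ σ.toLinearMap) + LinearMap.mulLeft K (algebraMap K L a + c)

lemma T10_apply {K L : Type*} [Field K] [Field L] [Algebra K L]
    (σ : L ≃ₐ[K] L) (a : K) (c : L) (z : L) :
    T10 σ a c z = a • σ (σ z) + (algebraMap K L a + c) * z := rfl

theorem stmt10 {K L : Type*} [Field K] [Field L] [CharP K 2] [Algebra K L]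
    [IsGalois K L] (hdim : Module.finrank K L = 4) (σ : L ≃ₐ[K] L)
    (hgen : ∀ τ : L ≃ₐ[K] L, τ ∈ Subgroup.zpowers σ) :
    (∀ a : K, a ≠ 0 →
      Module.finrank K (LinearMap.range (T10 σ a 0)) = 2 ∧
      T10 σ a 0 ∘ₗ T10 σ a 0 = 0) ∧
    (∀ (a : K) (c : L), c + σ c + σ (σ c) + σ (σ (σ c)) = 0 → c ≠ 0 →
      Function.Bijective (T10 σ a c)) ∧
    ∃ N : Submodule K (L →ₗ[K] L),
      (↑N = {T : L →ₗ[K] L | ∃ a : K, ∃ c : L,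
        c + σ c + σ (σ c) + σ (σ (σ c)) = 0 ∧ T = T10 σ a c}) ∧
      Module.finrank K N = 4 ∧
      ∃ Z : Submodule K (L →ₗ[K] L),
        (↑Z = {T : L →ₗ[K] L | (∃ a : K, ∃ c : L,
          c + σ c + σ (σ c) + σ (σ (σ c)) = 0 ∧ T = T10 σ a c) ∧
          LinearMap.det T = 0}) ∧
        Module.finrank K Z = 1 := by
  classical
  haveI : FiniteDimensional K L :=
    FiniteDimensional.of_finrank_pos (by rw [hdim]; norm_num)
  haveI : CharP L 2 := charP_of_injective_algebraMap (algebraMap K L).injective 2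
  have h2L : ∀ x : L, x + x = 0 := CharTwo.add_self_eq_zero
  have hcard : Fintype.card (L ≃ₐ[K] L) = 4 := by
    rw [← Nat.card_eq_fintype_card, IsGalois.card_aut_eq_finrank, hdim]
  have htop : Subgroup.zpowers σ = ⊤ := by
    ext τ; simpa using hgen τ
  have hord : orderOf σ = 4 := by
    rw [← Fintype.card_zpowers (x := σ)]
    rw [show Fintype.card (Subgroup.zpowers σ) = Fintype.card (L ≃ₐ[K] L) from
      Fintype.card_congr (by rw [htop]; exact Subgroup.topEquiv.toEquiv)]
    exact hcard
  have hσ4 : σ ^ 4 = 1 := by rw [← hord]; exact pow_orderOf_eq_one σ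
  have h4 : ∀ z : L, σ (σ (σ (σ z))) = z := by
    intro z
    have := DFunLike.congr_fun hσ4 z
    simpa [pow_succ] using this
  have hne2 : σ ^ 2 ≠ 1 := by
    intro h
    have := orderOf_dvd_of_pow_eq_one h
    rw [hord] at this
    omega
  obtain ⟨z₀, hz₀⟩ : ∃ z : L, σ (σ z) ≠ z := by
    by_contra h
    push_neg at h
    apply hne2
    ext z
    simpa [pow_succ] using h z
  have hz₀' : σ (σ z₀) + z₀ ≠ 0 := by
    intro h
    exact hz₀ (by linear_combination h - h2L z₀)
  -- powers of σ are distinct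
  have hpow_ne : ∀ i j : ℕ, i < j → j < 4 → σ ^ i ≠ σ ^ j := by
    intro i j hij hj h
    rw [pow_eq_pow_iff_modEq, hord, Nat.ModEq] at h
    omega
  have ne01 : (1 : L ≃ₐ[K] L) ≠ σ := by simpa using hpow_ne 0 1 (by norm_num) (by norm_num)
  have ne02 : (1 : L ≃ₐ[K] L) ≠ σ ^ 2 := by simpa using hpow_ne 0 2 (by norm_num) (by norm_num)
  have ne03 : (1 : L ≃ₐ[K] L) ≠ σ ^ 3 := by simpa using hpow_ne 0 3 (by norm_num) (by norm_num)
  have ne12 : σ ≠ σ ^ 2 := by simpa using hpow_ne 1 2 (by norm_num) (by norm_num)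
  have ne13 : σ ≠ σ ^ 3 := by simpa using hpow_ne 1 3 (by norm_num) (by norm_num)
  have ne23 : σ ^ 2 ≠ σ ^ 3 := hpow_ne 2 3 (by norm_num) (by norm_num)
  have huniv : (Finset.univ : Finset (L ≃ₐ[K] L)) = {1, σ, σ ^ 2, σ ^ 3} := by
    symm
    apply Finset.eq_univ_of_card
    rw [hcard]
    rw [Finset.card_insert_of_notMem (by simp [ne01, ne02, ne03]),
      Finset.card_insert_of_notMem (by simp [ne12, ne13]),
      Finset.card_insert_of_notMem (by simp [ne23]),
      Finset.card_singleton]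
  have htr : ∀ c : L, c + σ c + σ (σ c) + σ (σ (σ c))
      = algebraMap K L (Algebra.trace K L c) := by
    intro c
    rw [trace_eq_sum_automorphisms, huniv]
    rw [Finset.sum_insert (by simp [ne01, ne02, ne03]),
      Finset.sum_insert (by simp [ne12, ne13]),
      Finset.sum_insert (by simp [ne23]),
      Finset.sum_singleton]
    simp [pow_succ, AlgEquiv.mul_apply]
    ring
  set W : Submodule K L := LinearMap.ker (Algebra.trace K L) with hWdef
  have hWmem : ∀ c : L, (c + σ c + σ (σ c) + σ (σ (σ c)) = 0) ↔ c ∈ W := by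
    intro c
    rw [htr c, map_eq_zero_iff (algebraMap K L) (algebraMap K L).injective]
    exact (LinearMap.mem_ker).symm
  have hW3 : Module.finrank K W = 3 := by
    have h1 := LinearMap.finrank_range_add_finrank_ker (Algebra.trace K L)
    rw [LinearMap.range_eq_top.mpr (Algebra.trace_surjective K L), finrank_top,
      Module.finrank_self, hdim, ← hWdef] at h1
    omega
  -- part (i): T² = 0
  have hTsq : ∀ a : K, T10 σ a 0 ∘ₗ T10 σ a 0 = 0 := by
    intro a
    ext z
    simp only [LinearMap.comp_apply, T10_apply, LinearMap.zero_apply, add_zero, map_add,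
      map_smul, map_mul, AlgEquiv.commutes, Algebra.smul_def, h4]
    ring_nf
    linear_combination h2L (algebraMap K L a * algebraMap K L a * z)
      + h2L (algebraMap K L a * algebraMap K L a * σ (σ z))
  -- part (ii): bijectivity
  have hbij : ∀ (a : K) (c : L), c + σ c + σ (σ c) + σ (σ (σ c)) = 0 → c ≠ 0 →
      Function.Bijective (T10 σ a c) := by
    intro a c htz hc
    have hinj : Function.Injective (T10 σ a c) := by
      rw [← LinearMap.ker_eq_bot]
      rw [Submodule.eq_bot_iff]
      intro z hz
      rw [LinearMap.mem_ker, T10_apply] at hz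
      by_contra hz0
      rcases eq_or_ne a 0 with rfl | ha
      · simp only [map_zero, zero_smul, zero_add] at hz
        rcases mul_eq_zero.mp hz with h | h
        · exact hc h
        · exact hz0 h
      · set A : L := algebraMap K L a with hA
        have hA0 : A ≠ 0 := by
          rw [hA]
          exact (map_ne_zero (algebraMap K L)).mpr ha
        set d : L := 1 + c * A⁻¹ with hd
        have heq : A * σ (σ z) = (A + c) * z := by
          have h' : A * σ (σ z) + (A + c) * z = 0 := by
            rw [← Algebra.smul_def]; exact hz
          linear_combination h' - h2L ((A + c) * z)
        have hσ2z : σ (σ z) = d * z := by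
          rw [hd]
          field_simp
          linear_combination heq
        have hσA : σ A = A := by rw [hA]; exact σ.commutes a
        have hσAi : σ A⁻¹ = A⁻¹ := by rw [map_inv₀, hσA]
        have hσd : σ d = 1 + σ c * A⁻¹ := by
          rw [hd, map_add, map_one, map_mul, hσAi]
        have hσ2d : σ (σ d) = 1 + σ (σ c) * A⁻¹ := by
          rw [hσd, map_add, map_one, map_mul, hσAi]
        have hσ3d : σ (σ (σ d)) = 1 + σ (σ (σ c)) * A⁻¹ := by
          rw [hσ2d, map_add, map_one, map_mul, hσAi]
        have h4z : (1 : L) + 1 + 1 + 1 = 0 := by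
          have := h2L 1
          linear_combination this + h2L (1 + 1) - this
        have htr0 : d + σ d + σ (σ d) + σ (σ (σ d)) = 0 := by
          rw [hσ3d, hσ2d, hσd, hd]
          linear_combination A⁻¹ * htz + h4z
        have hdz : z = σ (σ d) * (d * z) := by
          calc z = σ (σ (σ (σ z))) := (h4 z).symm
          _ = σ (σ (d * z)) := by rw [hσ2z]
          _ = σ (σ d) * σ (σ z) := by rw [map_mul, map_mul]
          _ = σ (σ d) * (d * z) := by rw [hσ2z]
        have hdd : σ (σ d) * d = 1 := by
          have h0 : (σ (σ d) * d - 1) * z = 0 := by linear_combination -hdz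
          rcases mul_eq_zero.mp h0 with h | h
          · linear_combination h
          · exact absurd h hz0
        have hd0 : d ≠ 0 := by
          intro h
          rw [h, mul_zero] at hdd
          exact zero_ne_one hdd
        have hσd0 : σ d ≠ 0 := by
          intro h
          exact hd0 (σ.injective (by rw [h, map_zero]))
        have hσ2dd : σ (σ d) = d⁻¹ := eq_inv_of_mul_eq_one_left hdd
        have hσ3d' : σ (σ (σ d)) = (σ d)⁻¹ := by rw [hσ2dd, map_inv₀]
        rw [hσ3d', hσ2dd] at htr0
        have hkey : (d + σ d) * (d * σ d + 1) = 0 := by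
          have hu : d⁻¹ * d = 1 := inv_mul_cancel₀ hd0
          have hv : (σ d)⁻¹ * σ d = 1 := inv_mul_cancel₀ hσd0
          linear_combination (d * σ d) * htr0 - σ d * hu - d * hv
        have hdσd : d = σ d := by
          rcases mul_eq_zero.mp hkey with h | h
          · linear_combination h - h2L (σ d)
          · have h1 : d * σ d = 1 := by linear_combination h - h2L 1
            have h2 : σ d = σ (σ d) := by
              rw [hσ2dd]
              exact eq_inv_of_mul_eq_one_right h1
            exact σ.injective h2
        have hσ2d' : σ (σ d) = d := by rw [← hdσd, ← hdσd]
        have hd2 : d * d = 1 := by rw [hσ2d'] at hdd; exact hdd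
        have hd1 : d = 1 := by
          have h0 : (d - 1) * (d + 1) = 0 := by linear_combination hd2
          rcases mul_eq_zero.mp h0 with h | h
          · linear_combination h
          · linear_combination h - h2L 1
        apply hc
        have h0 : c * A⁻¹ = 0 := by
          rw [hd] at hd1
          linear_combination hd1
        rcases mul_eq_zero.mp h0 with h | h
        · exact h
        · exact absurd h (inv_ne_zero hA0)
    exact ⟨hinj, LinearMap.injective_iff_surjective.mp hinj⟩
  -- part (i): rank
  have hrank : ∀ a : K, a ≠ 0 → Module.finrank K (LinearMap.range (T10 σ a 0)) = 2 := by
    intro a ha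
    set F := IntermediateField.fixedField (Subgroup.zpowers (σ ^ 2)) with hF
    have hker : LinearMap.ker (T10 σ a 0) = Subalgebra.toSubmodule F.toSubalgebra := by
      ext z
      have hTz : T10 σ a 0 z = a • (σ (σ z) + z) := by
        simp only [T10_apply, add_zero, smul_add, Algebra.smul_def]
        ring
      have hmem : z ∈ Subalgebra.toSubmodule F.toSubalgebra ↔ σ (σ z) = z := by
        constructor
        · intro h
          have h2 : (⟨σ ^ 2, Subgroup.mem_zpowers _⟩ : Subgroup.zpowers (σ ^ 2)) • z = z := h _
          simpa [pow_succ, AlgEquiv.smul_def] using h2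
        · intro h
          have hst : σ ^ 2 ∈ MulAction.stabilizer (L ≃ₐ[K] L) z := by
            show (σ ^ 2) • z = z
            simpa [pow_succ, AlgEquiv.smul_def] using h
          have hle : Subgroup.zpowers (σ ^ 2) ≤ MulAction.stabilizer (L ≃ₐ[K] L) z :=
            Subgroup.zpowers_le.mpr hst
          intro g
          exact hle g.2
      rw [LinearMap.mem_ker, hTz, hmem, smul_eq_zero]
      constructor
      · rintro (h | h)
        · exact absurd h ha
        · linear_combination h - h2L z
      · intro h
        right
        linear_combination h + h2L z
    have hcard2 : Fintype.card (Subgroup.zpowers (σ ^ 2)) = 2 := by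
      rw [Fintype.card_zpowers, orderOf_pow, hord]
      norm_num
    have h1 : Module.finrank F L = 2 := by
      rw [hF, IntermediateField.finrank_fixedField_eq_card, Nat.card_eq_fintype_card, hcard2]
    have h2' := Module.finrank_mul_finrank K F L
    rw [h1, hdim] at h2'
    have h3 := LinearMap.finrank_range_add_finrank_ker (T10 σ a 0)
    rw [hker, hdim] at h3
    have h5' : Module.finrank K F.toSubalgebra = Module.finrank K F := rfl
    have h4' : Module.finrank K (Subalgebra.toSubmodule F.toSubalgebra) = 2 := by
      rw [Subalgebra.finrank_toSubmodule, h5']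
      omega
    omega
  refine ⟨fun a ha => ⟨hrank a ha, hTsq a⟩, hbij, ?_⟩
  -- the linear parametrization
  have hsmul_mul : ∀ (k : K) (x : L), k • x = algebraMap K L k * x := fun k x => Algebra.smul_def k x
  let Φ : K × L →ₗ[K] (L →ₗ[K] L) :=
    { toFun := fun p => T10 σ p.1 p.2
      map_add' := by
        intro p q
        ext z
        simp only [LinearMap.add_apply, T10_apply, map_add, Algebra.smul_def,
          Prod.fst_add, Prod.snd_add]
        ring
      map_smul' := by
        intro k p
        ext z
        simp only [Prod.smul_fst, Prod.smul_snd, RingHom.id_apply, LinearMap.smul_apply,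
          T10_apply, smul_eq_mul, map_mul]
        simp only [Algebra.smul_def, map_mul]
        ring }
  have hΦapp : ∀ p : K × L, Φ p = T10 σ p.1 p.2 := fun p => rfl
  have hΦinj : Function.Injective Φ := by
    rw [injective_iff_map_eq_zero]
    rintro ⟨a, c⟩ h
    rw [hΦapp] at h
    have h1 : a • σ (σ 1) + (algebraMap K L a + c) * 1 = 0 := by
      rw [← T10_apply, h]; rfl
    simp only [map_one, mul_one] at h1
    rw [Algebra.smul_def, mul_one] at h1
    have hc : c = 0 := by linear_combination h1 - h2L (algebraMap K L a)
    subst hc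
    have h2 : a • (σ (σ z₀) + z₀) = 0 := by
      have h3 : T10 σ a 0 z₀ = 0 := by rw [h]; rfl
      rw [T10_apply, add_zero] at h3
      simp only [smul_add, Algebra.smul_def]
      simp only [Algebra.smul_def] at h3
      linear_combination h3
    rcases smul_eq_zero.mp h2 with h | h
    · simp [h]
    · exact absurd h hz₀'
  let Φ' : K × W →ₗ[K] (L →ₗ[K] L) :=
    Φ ∘ₗ LinearMap.prodMap (LinearMap.id : K →ₗ[K] K) W.subtype
  have hΦ'inj : Function.Injective Φ' := by
    intro p q h
    have h2 : ((p.1, (p.2 : L)) : K × L) = (q.1, (q.2 : L)) := hΦinj h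
    have := Prod.ext_iff.mp h2
    exact Prod.ext this.1 (Subtype.ext this.2)
  refine ⟨LinearMap.range Φ', ?_, ?_, ?_⟩
  · ext T
    simp only [SetLike.mem_coe, LinearMap.mem_range, Set.mem_setOf_eq]
    constructor
    · rintro ⟨⟨a, c⟩, rfl⟩
      exact ⟨a, c.1, (hWmem c.1).mpr c.2, rfl⟩
    · rintro ⟨a, c, htz, rfl⟩
      exact ⟨(a, ⟨c, (hWmem c).mp htz⟩), rfl⟩
  · rw [LinearMap.finrank_range_of_inj hΦ'inj, Module.finrank_prod, Module.finrank_self, hW3]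
  · -- the determinant-zero subspace
    have hsmulT : ∀ a : K, a • T10 σ 1 0 = T10 σ a 0 := by
      intro a
      ext z
      simp only [LinearMap.smul_apply, T10_apply, add_zero, map_one, one_smul, one_mul]
      simp only [smul_add, Algebra.smul_def]
      ring
    have hdet0 : ∀ a : K, LinearMap.det (T10 σ a 0) = 0 := by
      intro a
      have h := congrArg LinearMap.det (hTsq a)
      rw [LinearMap.det_comp, LinearMap.det_zero, hdim] at h
      norm_num at h
      exact h
    have hT0tz : (0 : L) + σ 0 + σ (σ 0) + σ (σ (σ 0)) = 0 := by simp
    refine ⟨Submodule.span K {T10 σ 1 0}, ?_, ?_⟩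
    · ext T
      simp only [SetLike.mem_coe, Set.mem_setOf_eq]
      constructor
      · intro hT
        obtain ⟨a, rfl⟩ := Submodule.mem_span_singleton.mp hT
        rw [hsmulT a]
        exact ⟨⟨a, 0, hT0tz, rfl⟩, hdet0 a⟩
      · rintro ⟨⟨a, c, htz, rfl⟩, hdet⟩
        have hc : c = 0 := by
          by_contra hc
          have hb := hbij a c htz hc
          have hu : IsUnit (LinearMap.det (T10 σ a c)) := by
            exact (LinearEquiv.ofBijective (T10 σ a c) hb).isUnit_det'
          rw [hdet] at hu
          exact hu.ne_zero rfl
        subst hc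
        exact Submodule.mem_span_singleton.mpr ⟨a, hsmulT a⟩
    · apply finrank_span_singleton
      intro h
      have h1 : T10 σ 1 0 z₀ = 0 := by rw [h]; rfl
      rw [T10_apply, add_zero, map_one, one_smul, one_mul] at h1
      exact hz₀' h1
end

section
/- Let q be a power of an odd prime and f ∈ F_q[x_1,...,x_d]. Suppose y² − f is reducible over the algebraic closure of F_q (as a polynomial in x_1,...,x_d,y). Then f = g² for some g ∈ E[x_1,...,x_d], where E = F_q or E = F_{q²}; in the latter case g^σ = −g, where σ is the q-th power Frobenius applied to the coefficients of g. -/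
set_option maxHeartbeats 1000000
set_option synthInstance.maxHeartbeats 400000


open MvPolynomial

/-- If all coefficients of a multivariate polynomial lie in the range of a ring hom,
then the polynomial is in the range of the induced map. -/
lemma aux_exists_preimage {σ R S : Type*} [CommSemiring R] [CommSemiring S] (f : R →+* S)
    (g : MvPolynomial σ S) (h : ∀ m, MvPolynomial.coeff m g ∈ Set.range f) :
    ∃ g₀ : MvPolynomial σ R, MvPolynomial.map f g₀ = g := by
  classical
  choose c hc using h
  refine ⟨∑ m ∈ g.support, MvPolynomial.monomial m (c m), ?_⟩
  rw [map_sum]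
  simp only [MvPolynomial.map_monomial, hc]
  exact MvPolynomial.support_sum_monomial_coeff g

/-- An element of a field fixed by `x ↦ x ^ card E` lies in the image of the finite field `E`
under any ring embedding. -/
lemma aux_mem_range_of_pow_card {E L : Type*} [Field E] [Fintype E] [Field L] (emb : E →+* L)
    (c : L) (hc : c ^ Fintype.card E = c) : c ∈ Set.range emb := by
  classical
  set q := Fintype.card E with hq
  have hq1 : 1 < q := Fintype.one_lt_card
  set P : Polynomial L := Polynomial.X ^ q - Polynomial.X with hP
  have hPne : P ≠ 0 := by
    intro h0
    have : P.coeff q = 1 := by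
      simp [hP, Polynomial.coeff_X_pow, Polynomial.coeff_X, hq1.ne]
    rw [h0] at this
    simp at this
  have hdeg : P.natDegree ≤ q := by
    refine le_trans (Polynomial.natDegree_sub_le _ _) ?_
    simp [Polynomial.natDegree_X_pow, Polynomial.natDegree_X]
    omega
  have hroot : ∀ x : L, x ^ q = x → x ∈ P.roots.toFinset := by
    intro x hx
    rw [Multiset.mem_toFinset, Polynomial.mem_roots hPne]
    simp [hP, Polynomial.IsRoot, hx]
  have himg : (Finset.univ.image emb) ⊆ P.roots.toFinset := by
    intro x hx
    obtain ⟨e, _, rfl⟩ := Finset.mem_image.mp hx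
    exact hroot _ (by rw [← map_pow, FiniteField.pow_card])
  have hcard : P.roots.toFinset.card ≤ (Finset.univ.image emb).card := by
    rw [Finset.card_image_of_injective _ emb.injective, Finset.card_univ]
    exact le_trans (Multiset.toFinset_card_le _) (le_trans (Polynomial.card_roots' P) hdeg)
  have heq : (Finset.univ.image emb) = P.roots.toFinset :=
    Finset.eq_of_subset_of_card_le himg hcard
  have : c ∈ (Finset.univ.image emb) := heq ▸ hroot c hc
  obtain ⟨e, _, he⟩ := Finset.mem_image.mp this
  exact ⟨e, he⟩

/-- If `X^2 - C a` is reducible over a multivariate polynomial ring over a field,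
then `a` is a square. -/
lemma aux_sq_root {d : ℕ} {k : Type*} [Field k] (a : MvPolynomial (Fin d) k)
    (hred : ¬ Irreducible (Polynomial.X ^ 2 - Polynomial.C a)) :
    ∃ g : MvPolynomial (Fin d) k, g ^ 2 = a := by
  set K := FractionRing (MvPolynomial (Fin d) k) with hK
  haveI : IsIntegrallyClosed (MvPolynomial (Fin d) k) := inferInstance
  have hmon : (Polynomial.X ^ 2 - Polynomial.C a).Monic :=
    Polynomial.monic_X_pow_sub_C a two_ne_zero
  have hred2 : ¬ Irreducible ((Polynomial.X ^ 2 - Polynomial.C a).map (algebraMap (MvPolynomial (Fin d) k) K)) := by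
    rw [← hmon.irreducible_iff_irreducible_map_fraction_map]
    exact hred
  rw [Polynomial.map_sub, Polynomial.map_pow, Polynomial.map_X, Polynomial.map_C] at hred2
  have : ∃ b : K, b ^ 2 = algebraMap (MvPolynomial (Fin d) k) K a := by
    by_contra hb
    push_neg at hb
    exact hred2 (X_pow_sub_C_irreducible_of_prime Nat.prime_two hb)
  obtain ⟨b, hb⟩ := this
  have hint : IsIntegral (MvPolynomial (Fin d) k) b := by
    refine ⟨Polynomial.X ^ 2 - Polynomial.C a, hmon, ?_⟩
    simp [Polynomial.eval₂_sub, hb]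
  obtain ⟨g, hg⟩ := IsIntegrallyClosed.isIntegral_iff.mp hint
  refine ⟨g, IsFractionRing.injective (MvPolynomial (Fin d) k) K ?_⟩
  rw [map_pow, hg, hb]

theorem stmt14 {F : Type*} [Field F] [Fintype F] (hodd : Odd (Fintype.card F))
    {d : ℕ} (f : MvPolynomial (Fin d) F)
    (hred : ¬ Irreducible (Polynomial.X ^ 2 - Polynomial.C
      (MvPolynomial.map (algebraMap F (AlgebraicClosure F)) f)))
    (E : Type*) [Field E] [Algebra F E] (hE : Module.finrank F E = 2) :
    (∃ g : MvPolynomial (Fin d) F, f = g ^ 2) ∨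
    (∃ g : MvPolynomial (Fin d) E,
      MvPolynomial.map (algebraMap F E) f = g ^ 2 ∧
      ∀ m, MvPolynomial.coeff m g ^ Fintype.card F = - MvPolynomial.coeff m g) := by
  classical
  set L := AlgebraicClosure F
  set ι : F →+* L := algebraMap F L with hι
  set fbar : MvPolynomial (Fin d) L := MvPolynomial.map ι f with hfbar
  -- Step 1: get a square root of fbar in MvPolynomial (Fin d) L
  obtain ⟨g, hg⟩ : ∃ g : MvPolynomial (Fin d) L, g ^ 2 = fbar := aux_sq_root fbar hred
  -- Step 2: Frobenius
  set q := Fintype.card F with hq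
  set p := ringChar F with hp
  haveI : CharP F p := ringChar.charP F
  have hpp : p.Prime := CharP.char_is_prime F p
  obtain ⟨n, -, hn⟩ := FiniteField.card F p
  haveI : CharP L p := charP_of_injective_algebraMap (algebraMap F L).injective p
  haveI : ExpChar L p := ExpChar.prime hpp
  set φ : L →+* L := iterateFrobenius L p n with hφ
  have hφ_def : ∀ x : L, φ x = x ^ q := by
    intro x
    rw [hφ, iterateFrobenius_def, ← hn]
  have hφι : ∀ a : F, φ (ι a) = ι a := by
    intro a
    rw [hφ_def, ← map_pow, FiniteField.pow_card]
  set gφ : MvPolynomial (Fin d) L := MvPolynomial.map φ g with hgφ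
  have hcoeffφ : ∀ m, MvPolynomial.coeff m gφ = MvPolynomial.coeff m g ^ q := by
    intro m
    rw [hgφ, MvPolynomial.coeff_map, hφ_def]
  have hgφ2 : gφ ^ 2 = g ^ 2 := by
    rw [hgφ, ← map_pow, hg, hfbar, MvPolynomial.map_map]
    rw [show φ.comp ι = ι from RingHom.ext hφι]
  have hcases : gφ = g ∨ gφ = -g := by
    have h0 : (gφ - g) * (gφ + g) = 0 := by ring_nf; linear_combination hgφ2
    rcases mul_eq_zero.mp h0 with h | h
    · left; exact sub_eq_zero.mp h
    · right; exact eq_neg_of_add_eq_zero_left h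
  rcases hcases with hcase | hcase
  -- Case g^σ = g : descend to F
  · left
    have hmem : ∀ m, MvPolynomial.coeff m g ∈ Set.range ι := by
      intro m
      refine aux_mem_range_of_pow_card ι _ ?_
      rw [← hq, ← hcoeffφ, hcase]
    obtain ⟨g₀, hg₀⟩ := aux_exists_preimage ι g hmem
    refine ⟨g₀, MvPolynomial.map_injective ι ι.injective ?_⟩
    rw [map_pow, hg₀, hg, hfbar]
  -- Case g^σ = -g : descend to E
  · right
    haveI : FiniteDimensional F E := .of_finrank_pos (by rw [hE]; norm_num)
    haveI : Finite E := Module.finite_of_finite F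
    haveI : Fintype E := Fintype.ofFinite E
    have hcardE : Fintype.card E = q ^ 2 := by rw [Module.card_eq_pow_finrank (K := F) (V := E), hE]
    set j : E →ₐ[F] L := IsAlgClosed.lift
    have hj : Function.Injective (j : E →+* L) := (j : E →+* L).injective
    have hqodd : Odd q := hodd
    have hmem : ∀ m, MvPolynomial.coeff m g ∈ Set.range (j : E →+* L) := by
      intro m
      refine aux_mem_range_of_pow_card _ _ ?_
      have h1 : MvPolynomial.coeff m g ^ q = - MvPolynomial.coeff m g := by
        rw [← hcoeffφ, hcase, MvPolynomial.coeff_neg]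
      rw [hcardE, pow_two, pow_mul, h1, hqodd.neg_pow, h1, neg_neg]
    obtain ⟨g₁, hg₁⟩ := aux_exists_preimage (j : E →+* L) g hmem
    refine ⟨g₁, ?_, ?_⟩
    · apply MvPolynomial.map_injective (j : E →+* L) hj
      rw [map_pow, hg₁, hg, hfbar, MvPolynomial.map_map]
      rw [show ((j : E →+* L).comp (algebraMap F E)) = ι from j.comp_algebraMap]
    · intro m
      apply hj
      have h1 : MvPolynomial.coeff m g ^ q = - MvPolynomial.coeff m g := by
        rw [← hcoeffφ, hcase, MvPolynomial.coeff_neg]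
      rw [map_pow, map_neg, ← MvPolynomial.coeff_map, hg₁]
      exact h1
end

section
/- Let q be an odd prime power. Consider F(x,y) = x^{2p} − x²y^{2p−2} + y^{2p} ∈ F_p[x,y] for an odd prime p. Then F(λ, μ) is a square in F_p for all (λ, μ) ∈ F_p², and if p ≡ 3 (mod 4), F is irreducible over F_p (in particular, not the square of a polynomial). -/
section helpers
open Polynomial


variable (p : ℕ) [Fact p.Prime]

noncomputable def fpoly : (ZMod p)[X] := X ^ (2*p) - X ^ 2 + 1

theorem fpoly_eq : fpoly p = X ^ (2*p) + (-(X^2) + 1) := by rw [fpoly]; ring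

theorem deg_lo : (-(X^2 : (ZMod p)[X]) + 1).degree < ((2*p : ℕ) : WithBot ℕ) := by
  have hp2 : 2 ≤ p := (Fact.out : p.Prime).two_le
  apply lt_of_le_of_lt (degree_add_le _ _)
  apply max_lt
  · rw [degree_neg, degree_X_pow]
    exact_mod_cast by omega
  · exact degree_one_le.trans_lt (by exact_mod_cast by omega : (0 : WithBot ℕ) < ((2*p:ℕ) : WithBot ℕ))

theorem fpoly_monic : (fpoly p).Monic := by
  rw [fpoly_eq]; exact monic_X_pow_add (deg_lo p)

theorem fpoly_natDegree : (fpoly p).natDegree = 2*p := by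
  rw [fpoly_eq, natDegree_add_eq_left_of_degree_lt, natDegree_X_pow]
  rw [degree_X_pow]; exact deg_lo p

theorem prod_X_sub_C_zmod : ∏ a : ZMod p, (X - C a) = X^p - X := by
  have hp1 : 1 < p := (Fact.out : p.Prime).one_lt
  have hmon : (X^p - X : (ZMod p)[X]).Monic := by
    apply monic_X_pow_sub
    rw [degree_X]; exact_mod_cast hp1
  have hdeg : (X^p - X : (ZMod p)[X]).natDegree = p := by
    rw [sub_eq_add_neg, natDegree_add_eq_left_of_degree_lt, natDegree_X_pow]
    rw [degree_neg, degree_X, degree_X_pow]; exact_mod_cast hp1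
  have hroots := FiniteField.roots_X_pow_card_sub_X (ZMod p)
  rw [ZMod.card] at hroots
  have hcard : Multiset.card (X^p - X : (ZMod p)[X]).roots = (X^p - X : (ZMod p)[X]).natDegree := by
    rw [hroots, hdeg, ← Finset.card_def, Finset.card_univ, ZMod.card]
  have := prod_multiset_X_sub_C_of_monic_of_roots_card_eq hmon hcard
  rw [hroots] at this
  rw [← this]
  rfl

-- generic lemma
theorem irreducible_of_irreducible_map_eval_one {R : Type*} [Field R]
    (G : Polynomial (Polynomial R)) (hG : G.Monic) (hdeg : 0 < G.natDegree)
    (h1 : Irreducible (G.map (Polynomial.evalRingHom (1:R)))) : Irreducible G := by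
  constructor
  · intro h
    have := natDegree_eq_zero_of_isUnit h
    omega
  · intro a b hab
    have hlc : a.leadingCoeff * b.leadingCoeff = 1 := by
      rw [← leadingCoeff_mul, ← hab]; exact hG
    have hua : IsUnit a.leadingCoeff := IsUnit.of_mul_eq_one _ hlc
    have hub : IsUnit b.leadingCoeff := IsUnit.of_mul_eq_one _ (by rwa [mul_comm] at hlc)
    have key : ∀ c : Polynomial (Polynomial R), IsUnit c.leadingCoeff →
        IsUnit (c.map (Polynomial.evalRingHom (1:R))) → IsUnit c := by
      intro c huc hmapc
      obtain ⟨r, hr, hCr⟩ := Polynomial.isUnit_iff.mp huc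
      have hne : (Polynomial.evalRingHom (1:R)) c.leadingCoeff ≠ 0 := by
        rw [← hCr]
        simpa using hr.ne_zero
      have hndeq : (c.map (Polynomial.evalRingHom (1:R))).natDegree = c.natDegree :=
        natDegree_map_of_leadingCoeff_ne_zero _ hne
      have hnd : c.natDegree = 0 := by
        rw [← hndeq]; exact natDegree_eq_zero_of_isUnit hmapc
      rw [eq_C_of_natDegree_eq_zero hnd]
      rw [Polynomial.isUnit_C]
      have : c.coeff 0 = c.leadingCoeff := by rw [leadingCoeff, hnd]
      rw [this]; exact huc
    have hmap : (G.map (Polynomial.evalRingHom (1:R))) =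
        (a.map (Polynomial.evalRingHom (1:R))) * (b.map (Polynomial.evalRingHom (1:R))) := by
      rw [hab, Polynomial.map_mul]
    rcases h1.isUnit_or_isUnit hmap with h | h
    · exact Or.inl (key a hua h)
    · exact Or.inr (key b hub h)

theorem fpoly_irreducible (p : ℕ) [Fact p.Prime] (hp : Odd p) (h4 : p % 4 = 3) :
    Irreducible (fpoly p) := by
  have hpp : p.Prime := Fact.out
  have hp2 : 2 ≤ p := hpp.two_le
  set L := AlgebraicClosure (ZMod p) with hL
  -- get a root β of fpoly in L
  have hfd0 : (fpoly p).degree ≠ 0 := by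
    rw [degree_eq_natDegree (fpoly_monic p).ne_zero, fpoly_natDegree]
    exact_mod_cast by omega
  obtain ⟨β, hβ⟩ : ∃ β : L, aeval β (fpoly p) = 0 := by
    obtain ⟨β, hβ⟩ := IsAlgClosed.exists_root ((fpoly p).map (algebraMap (ZMod p) L))
      (by rwa [degree_map_eq_of_injective (algebraMap (ZMod p) L).injective])
    exact ⟨β, by rwa [IsRoot, eval_map, ← aeval_def] at hβ⟩
  set α : L := β ^ 2 with hαdef
  have hroot : β ^ (2*p) - β ^ 2 + 1 = 0 := by
    simpa [fpoly] using hβ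
  have hα : α ^ p = α - 1 := by
    rw [hαdef, ← pow_mul]
    linear_combination hroot
  -- iterated frobenius on α
  have hk : ∀ k : ℕ, α ^ (p ^ k) = α - (k : L) := by
    intro k
    induction k with
    | zero => simp
    | succ k ih =>
      have hcast : ((k : L)) ^ p = (k : L) := by
        have : ((k : ZMod p)) ^ p = (k : ZMod p) := ZMod.pow_card _
        calc ((k:ℕ) : L) ^ p = algebraMap (ZMod p) L ((k : ZMod p) ^ p) := by
              push_cast [map_natCast]; ring
          _ = algebraMap (ZMod p) L ((k : ZMod p)) := by rw [this]
          _ = (k : L) := by rw [map_natCast]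
      rw [pow_succ, pow_mul, ih, sub_pow_char, hα, hcast]
      push_cast
      ring
  haveI : NeZero p := ⟨hpp.pos.ne'⟩
  have hα0 : α ≠ 0 := by
    intro h
    rw [h] at hα
    simp only [zero_sub, ne_eq] at hα
    have : (0:L) ^ p = 0 := zero_pow hpp.ne_zero
    rw [this] at hα
    exact one_ne_zero (neg_eq_zero.mp hα.symm)
  have hint : IsIntegral (ZMod p) β := ⟨fpoly p, fpoly_monic p, by rwa [← aeval_def]⟩
  set K := IntermediateField.adjoin (ZMod p) {β} with hK
  haveI : FiniteDimensional (ZMod p) K := IntermediateField.adjoin.finiteDimensional hint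
  set m := Module.finrank (ZMod p) K with hmdef
  have hm : (minpoly (ZMod p) β).natDegree = m := (IntermediateField.adjoin.finrank hint).symm
  have hβK : β ∈ K := IntermediateField.mem_adjoin_simple_self _ _
  have hαK : α ∈ K := pow_mem hβK 2
  haveI : Finite K := Module.finite_of_finite (ZMod p)
  haveI : Fintype K := Fintype.ofFinite K
  have hcard : Fintype.card K = p ^ m := by
    rw [Module.card_eq_pow_finrank (K := ZMod p), ZMod.card]
  have hpowK : ∀ x : K, x ^ (p ^ m) = x := by
    intro x
    have := FiniteField.pow_card x
    rwa [hcard] at this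
  -- p ∣ m
  have hpm : p ∣ m := by
    have h1 : α ^ (p ^ m) = α := by
      have := hpowK ⟨α, hαK⟩
      have h2 := congrArg (Subtype.val) this
      push_cast at h2
      exact h2
    rw [hk m] at h1
    have : (m : L) = 0 := by linear_combination -h1
    exact (CharP.cast_eq_zero_iff L p m).mp this
  -- m ≤ 2p
  have hdvd : minpoly (ZMod p) β ∣ fpoly p := minpoly.dvd _ _ hβ
  have hmle : m ≤ 2 * p := by
    rw [← hm, ← fpoly_natDegree p]
    exact natDegree_le_of_dvd hdvd (fpoly_monic p).ne_zero
  have hmpos : 0 < m := Module.finrank_pos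
  -- m = p or m = 2p
  obtain ⟨t, htm⟩ := hpm
  have ht : t = 1 ∨ t = 2 := by
    rcases Nat.lt_or_ge t 3 with h | h
    · interval_cases t
      · omega
      · left; rfl
      · right; rfl
    · exfalso
      have : 3 * p ≤ p * t := by calc 3*p = p*3 := by ring
                                    _ ≤ p*t := Nat.mul_le_mul_left p h
      omega
  -- rule out m = p
  have hnot : t ≠ 1 := by
    rintro rfl
    rw [mul_one] at htm
    rw [htm] at hcard
    -- the norm computation
    set N := ∑ k ∈ Finset.range p, p^k with hN
    have hprodL : ∏ a : ZMod p, (α - algebraMap (ZMod p) L a) = α^p - α := by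
      have h := congrArg (fun q : (ZMod p)[X] => eval α (q.map (algebraMap (ZMod p) L)))
        (prod_X_sub_C_zmod p)
      simpa using h
    have hNα : α ^ N = -1 := by
      have c1 : α ^ N = ∏ k ∈ Finset.range p, α ^ (p^k) :=
        (Finset.prod_pow_eq_pow_sum _ _ _).symm
      have c2 : ∏ k ∈ Finset.range p, α ^ (p^k) = ∏ k ∈ Finset.range p, (α - (k:L)) :=
        Finset.prod_congr rfl (fun k _ => hk k)
      have c3 : ∏ a : ZMod p, (α - algebraMap (ZMod p) L a)
          = ∏ k ∈ Finset.range p, (α - (k:L)) := by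
        apply Finset.prod_bij (i := fun (a : ZMod p) _ => a.val)
        · intro a _
          exact Finset.mem_range.mpr (ZMod.val_lt a)
        · intro a _ b _ hab
          exact ZMod.val_injective _ hab
        · intro k hk'
          refine ⟨(k : ZMod p), Finset.mem_univ _, ?_⟩
          rw [ZMod.val_natCast_of_lt (Finset.mem_range.mp hk')]
        · intro a _
          congr 1
          rw [← map_natCast (algebraMap (ZMod p) L) a.val, ZMod.natCast_val, ZMod.cast_id]
      rw [c1, c2, ← c3, hprodL, hα]
      ring
    -- -1 is a square in K
    have hsq : IsSquare (-1 : K) := by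
      refine ⟨⟨β, hβK⟩ ^ N, ?_⟩
      apply Subtype.coe_injective
      push_cast
      have hb : β ^ (N+N) = α ^ N := by rw [hαdef, ← pow_mul, two_mul]
      rw [← pow_add, hb, hNα]
    rw [FiniteField.isSquare_neg_one_iff, hcard] at hsq
    apply hsq
    -- p ^ p % 4 = 3
    obtain ⟨j, hj⟩ := hp
    rw [Nat.pow_mod, h4, hj, pow_succ, pow_mul, Nat.mul_mod, Nat.pow_mod]
    norm_num
  have ht2 : t = 2 := by tauto
  rw [ht2] at htm
  -- conclude
  have hdeg : (minpoly (ZMod p) β).natDegree = (fpoly p).natDegree := by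
    rw [hm, fpoly_natDegree, htm, mul_comm 2 p]
  have heq : fpoly p = minpoly (ZMod p) β := by
    obtain ⟨c, hc⟩ := hdvd
    have hc0 : c ≠ 0 := by
      rintro rfl
      rw [mul_zero] at hc
      exact (fpoly_monic p).ne_zero hc
    have hnd : c.natDegree = 0 := by
      have := fpoly_natDegree p
      rw [hc, natDegree_mul (minpoly.ne_zero hint) hc0, hdeg, fpoly_natDegree p] at this
      omega
    have hcC : c = C (c.coeff 0) := eq_C_of_natDegree_eq_zero hnd
    have hlc : (minpoly (ZMod p) β).leadingCoeff * c.leadingCoeff = 1 := by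
      rw [← leadingCoeff_mul, ← hc]
      exact fpoly_monic p
    rw [(minpoly.monic hint).leadingCoeff, one_mul] at hlc
    rw [leadingCoeff, hnd] at hlc
    rw [hc, hcC, hlc, map_one, mul_one]
  rw [heq]
  exact minpoly.irreducible hint

end helpers

open MvPolynomial

/-- The homogenization `x^{2p} - x^2 y^{2p-2} + y^{2p}` of `x^{2p} - x^2 + 1`. -/
noncomputable def Fpoly (p : ℕ) : MvPolynomial (Fin 2) (ZMod p) :=
  X 0 ^ (2 * p) - X 0 ^ 2 * X 1 ^ (2 * p - 2) + X 1 ^ (2 * p)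

section transfer
open MvPolynomial Polynomial
noncomputable def eqv (R : Type*) [CommSemiring R] :
    MvPolynomial (Fin 2) R ≃ₐ[R] Polynomial (Polynomial R) :=
  (MvPolynomial.finSuccEquiv R 1).trans <| Polynomial.mapAlgEquiv <|
    (MvPolynomial.finSuccEquiv R 0).trans <| Polynomial.mapAlgEquiv <|
      MvPolynomial.isEmptyAlgEquiv R (Fin 0)

theorem eqv_X0 (R : Type*) [CommSemiring R] :
    eqv R (MvPolynomial.X 0) = Polynomial.X := by
  simp [eqv, finSuccEquiv_X_zero, Polynomial.mapAlgEquiv]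

theorem eqv_X1 (R : Type*) [CommSemiring R] :
    eqv R (MvPolynomial.X 1) = Polynomial.C Polynomial.X := by
  have h1 : (1 : Fin 2) = (0 : Fin 1).succ := rfl
  rw [eqv]
  simp only [AlgEquiv.trans_apply, h1, finSuccEquiv_X_succ]
  rw [Polynomial.mapAlgEquiv]
  simp [finSuccEquiv_X_zero]

theorem eqv_Fpoly (p : ℕ) :
    eqv (ZMod p) (Fpoly p) = Polynomial.X ^ (2*p)
      - Polynomial.X ^ 2 * Polynomial.C (Polynomial.X ^ (2*p-2) : (ZMod p)[X])
      + Polynomial.C (Polynomial.X ^ (2*p)) := by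
  rw [Fpoly, map_add, map_sub, map_pow, map_mul, map_pow, map_pow, map_pow, eqv_X0, eqv_X1, ← map_pow, ← map_pow]


theorem G_props (p : ℕ) [Fact p.Prime] :
    (eqv (ZMod p) (Fpoly p)).Monic ∧ (eqv (ZMod p) (Fpoly p)).natDegree = 2*p ∧
      (eqv (ZMod p) (Fpoly p)).map (Polynomial.evalRingHom (1:ZMod p)) = fpoly p := by
  have hp2 : 2 ≤ p := (Fact.out : p.Prime).two_le
  have heq : eqv (ZMod p) (Fpoly p) = Polynomial.X ^ (2*p)
      + (-(Polynomial.X ^ 2 * Polynomial.C (Polynomial.X ^ (2*p-2) : (ZMod p)[X]))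
         + Polynomial.C (Polynomial.X ^ (2*p) : (ZMod p)[X])) := by
    rw [eqv_Fpoly]; ring
  have hC0 : (Polynomial.X ^ (2*p-2) : (ZMod p)[X]) ≠ 0 := pow_ne_zero _ Polynomial.X_ne_zero
  have hdlt : (-(Polynomial.X ^ 2 * Polynomial.C (Polynomial.X ^ (2*p-2) : (ZMod p)[X]))
         + Polynomial.C (Polynomial.X ^ (2*p) : (ZMod p)[X]) : Polynomial (Polynomial (ZMod p))).degree
         < ((2*p : ℕ) : WithBot ℕ) := by
    apply lt_of_le_of_lt (Polynomial.degree_add_le _ _)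
    apply max_lt
    · rw [Polynomial.degree_neg, Polynomial.degree_mul, Polynomial.degree_C hC0,
        Polynomial.degree_X_pow, add_zero]
      exact_mod_cast by omega
    · apply lt_of_le_of_lt (Polynomial.degree_C_le)
      exact_mod_cast by omega
  refine ⟨?_, ?_, ?_⟩
  · rw [heq]; exact Polynomial.monic_X_pow_add hdlt
  · rw [heq, Polynomial.natDegree_add_eq_left_of_degree_lt, Polynomial.natDegree_X_pow]
    rw [Polynomial.degree_X_pow]; exact hdlt
  · rw [heq, fpoly]
    simp only [Polynomial.map_add, Polynomial.map_neg, Polynomial.map_mul, Polynomial.map_pow,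
      Polynomial.map_X, Polynomial.map_C, Polynomial.coe_evalRingHom, Polynomial.eval_pow,
      Polynomial.eval_X, one_pow, Polynomial.map_one, Polynomial.C_1]
    ring

theorem Fpoly_irreducible (p : ℕ) [Fact p.Prime] (hp : Odd p) (h4 : p % 4 = 3) :
    Irreducible (Fpoly p) := by
  obtain ⟨hmon, hdeg, hmap⟩ := G_props p
  have hp2 : 2 ≤ p := (Fact.out : p.Prime).two_le
  have hirr : Irreducible (eqv (ZMod p) (Fpoly p)) := by
    apply irreducible_of_irreducible_map_eval_one _ hmon (by rw [hdeg]; omega)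
    rw [hmap]
    exact fpoly_irreducible p hp h4
  exact (MulEquiv.irreducible_iff (eqv (ZMod p))).mp hirr

end transfer

theorem stmt15 (p : ℕ) [Fact p.Prime] (hp : Odd p) :
    (∀ a b : ZMod p, ∃ s : ZMod p, eval ![a, b] (Fpoly p) = s ^ 2) ∧
    (p % 4 = 3 → Irreducible (Fpoly p)) := by
  constructor
  · have hp2 : 2 ≤ p := (Fact.out : p.Prime).two_le
    intro a b
    have hev : eval ![a, b] (Fpoly p) = a ^ (2*p) - a ^ 2 * b ^ (2*p-2) + b ^ (2*p) := by
      simp [Fpoly]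
    have ha : a ^ (2*p) = a ^ 2 := by
      rw [mul_comm, pow_mul, ZMod.pow_card]
    have hb : b ^ (2*p) = b ^ 2 := by
      rw [mul_comm, pow_mul, ZMod.pow_card]
    rcases eq_or_ne b 0 with rfl | hb0
    · refine ⟨a, ?_⟩
      rw [hev, ha, zero_pow (by omega), zero_pow (by omega), mul_zero]
      ring
    · refine ⟨b, ?_⟩
      have : b ^ (2*p-2) = 1 := by
        have h2 : 2*p-2 = (p-1)*2 := by omega
        rw [h2, pow_mul, ZMod.pow_card_sub_one_eq_one hb0, one_pow]
      rw [hev, ha, hb, this]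
      ring
  · intro h4
    exact Fpoly_irreducible p hp h4
end

section
/- Let M be a d-dimensional subspace of the space of m×n matrices over F_q containing an element of rank r. Then the number of elements of M of rank at least r is at least q^d − r·q^{d−1} + r − 1. -/
set_option maxHeartbeats 1000000

open Polynomial Matrix

private lemma evalCharpolyAux {F : Type*} [Field F] {k : ℕ} (M : Matrix (Fin k) (Fin k) F)
    (t : F) :
    (Matrix.charpoly M).eval t = Matrix.det (t • (1 : Matrix (Fin k) (Fin k) F) - M) := by
  rw [Matrix.charpoly, ← Polynomial.coe_evalRingHom, RingHom.map_det]
  congr 1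
  ext i j
  by_cases h : i = j <;>
    simp [h, Matrix.charmatrix_apply, Matrix.one_apply, Matrix.sub_apply, Matrix.smul_apply,
      Matrix.diagonal_apply]

private lemma zerosLeAux {F : Type*} [Field F] [Fintype F] [DecidableEq F] {k : ℕ}
    (B : Matrix (Fin k) (Fin k) F) :
    (Finset.univ.filter fun t : F => Matrix.det (B + t • 1) = 0).card ≤ k := by
  classical
  have hmono : (Finset.univ.filter fun t : F => Matrix.det (B + t • 1) = 0)
      ⊆ (Matrix.charpoly (-B)).roots.toFinset := by
    intro t ht
    simp only [Finset.mem_filter] at ht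
    rw [Multiset.mem_toFinset, Polynomial.mem_roots ((Matrix.charpoly_monic (-B)).ne_zero)]
    rw [Polynomial.IsRoot, evalCharpolyAux, sub_neg_eq_add, add_comm]
    exact ht.2
  calc (Finset.univ.filter fun t : F => Matrix.det (B + t • 1) = 0).card
      ≤ (Matrix.charpoly (-B)).roots.toFinset.card := Finset.card_le_card hmono
    _ ≤ Multiset.card (Matrix.charpoly (-B)).roots := Multiset.toFinset_card_le _
    _ ≤ (Matrix.charpoly (-B)).natDegree := Polynomial.card_roots' _
    _ = k := by rw [Matrix.charpoly_natDegree_eq_dim, Fintype.card_fin]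

private lemma existsPsiAux {F : Type*} [Field F] {m n r : ℕ} (A : Matrix (Fin m) (Fin n) F)
    (h : A.rank = r) :
    ∃ ψ : Matrix (Fin m) (Fin n) F →ₗ[F] Matrix (Fin r) (Fin r) F,
      ψ A = 1 ∧ ∀ X, (ψ X).det ≠ 0 → r ≤ X.rank := by
  classical
  set T := A.mulVecLin with hT
  have hfr : Module.finrank F (LinearMap.range T) = r := h
  let b : Module.Basis (Fin r) F (LinearMap.range T) := Module.finBasisOfFinrankEq F _ hfr
  let e : LinearMap.range T ≃ₗ[F] (Fin r → F) := b.equivFun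
  obtain ⟨s, hs⟩ := T.rangeRestrict.exists_rightInverse_of_surjective T.range_rangeRestrict
  obtain ⟨W', hW'⟩ := Submodule.exists_isCompl (LinearMap.range T)
  let p : (Fin m → F) →ₗ[F] LinearMap.range T := Submodule.projectionOnto _ _ hW'
  let u : (Fin r → F) →ₗ[F] (Fin n → F) := s ∘ₗ (e.symm : (Fin r → F) →ₗ[F] LinearMap.range T)
  let v : (Fin m → F) →ₗ[F] (Fin r → F) := (e : LinearMap.range T →ₗ[F] (Fin r → F)) ∘ₗ p
  have hsmul : ∀ (c : F) (X : Matrix (Fin m) (Fin n) F), (c • X).mulVecLin = c • X.mulVecLin := by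
    intro c X; ext w; simp [Matrix.mulVecLin_apply, Matrix.smul_mulVec]
  let ψ : Matrix (Fin m) (Fin n) F →ₗ[F] Matrix (Fin r) (Fin r) F :=
    { toFun := fun X => LinearMap.toMatrix' (v ∘ₗ X.mulVecLin ∘ₗ u)
      map_add' := by
        intro X Y
        show LinearMap.toMatrix' (v ∘ₗ (X + Y).mulVecLin ∘ₗ u) =
          LinearMap.toMatrix' (v ∘ₗ X.mulVecLin ∘ₗ u) + LinearMap.toMatrix' (v ∘ₗ Y.mulVecLin ∘ₗ u)
        rw [Matrix.mulVecLin_add, LinearMap.add_comp, LinearMap.comp_add, map_add]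
      map_smul' := by
        intro c X
        show LinearMap.toMatrix' (v ∘ₗ (c • X).mulVecLin ∘ₗ u) =
          (RingHom.id F) c • LinearMap.toMatrix' (v ∘ₗ X.mulVecLin ∘ₗ u)
        rw [hsmul, LinearMap.smul_comp, LinearMap.comp_smul, _root_.map_smul]
        rfl }
  have hψ : ∀ X, ψ X = LinearMap.toMatrix' (v ∘ₗ X.mulVecLin ∘ₗ u) := fun _ => rfl
  refine ⟨ψ, ?_, ?_⟩
  · have hid : v ∘ₗ T ∘ₗ u = LinearMap.id := by
      refine LinearMap.ext fun x => ?_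
      have h1 : T (u x) = ((T.rangeRestrict (s (e.symm x)) : LinearMap.range T) :
          Fin m → F) := rfl
      have h2 : T.rangeRestrict (s (e.symm x)) = e.symm x := by
        have := congrArg (fun f => f (e.symm x)) hs
        exact this
      simp only [LinearMap.comp_apply, LinearMap.id_apply, h1, h2]
      show e (p _) = x
      rw [Submodule.projectionOnto_apply_left hW']
      simp
    rw [hψ, ← hT, hid, LinearMap.toMatrix'_id]
  · intro X hdet
    rw [hψ] at hdet
    set g := v ∘ₗ X.mulVecLin ∘ₗ u with hg
    have hdet' : IsUnit ((LinearMap.toMatrix (Pi.basisFun F (Fin r)) (Pi.basisFun F (Fin r))) g).det := by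
      rw [LinearMap.toMatrix_eq_toMatrix']
      exact isUnit_iff_ne_zero.2 hdet
    have hsurj : Function.Surjective g := by
      have hco : (LinearEquiv.ofIsUnitDet hdet' : (Fin r → F) →ₗ[F] (Fin r → F)) = g :=
        LinearEquiv.coe_ofIsUnitDet hdet'
      rw [← hco]
      exact (LinearEquiv.ofIsUnitDet hdet').surjective
    have h1 : r = Module.finrank F (LinearMap.range g) := by
      rw [LinearMap.range_eq_top.2 hsurj, finrank_top, Module.finrank_fin_fun]
    have h2 : LinearMap.range g = Submodule.map v (LinearMap.range (X.mulVecLin ∘ₗ u)) := by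
      rw [hg, LinearMap.range_comp]
    have h3 : Module.finrank F (LinearMap.range g) ≤
        Module.finrank F (LinearMap.range (X.mulVecLin ∘ₗ u)) := by
      rw [h2]; exact Submodule.finrank_map_le _ _
    have h4 : Module.finrank F (LinearMap.range (X.mulVecLin ∘ₗ u)) ≤
        Module.finrank F (LinearMap.range X.mulVecLin) :=
      Submodule.finrank_mono (LinearMap.range_comp_le_range _ _)
    rw [Matrix.rank]
    omega

theorem stmt17 {F : Type*} [Field F] [Fintype F] {m n d r : ℕ}
    (M : Submodule F (Matrix (Fin m) (Fin n) F)) (hdim : Module.finrank F M = d)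
    (hex : ∃ A ∈ M, Matrix.rank A = r) :
    (Fintype.card F : ℤ) ^ d - r * (Fintype.card F : ℤ) ^ (d - 1) + r - 1 ≤
      (Nat.card {A : M // r ≤ Matrix.rank (A : Matrix (Fin m) (Fin n) F)} : ℤ) := by
  classical
  obtain ⟨A, hAM, hrank⟩ := hex
  set q := Fintype.card F with hq
  have hq1 : 1 ≤ q := Fintype.card_pos
  haveI : Fintype M := Fintype.ofFinite _
  rcases Nat.eq_zero_or_pos r with hr0 | hr
  · subst hr0
    have h1 : Nat.card {A : M // 0 ≤ Matrix.rank (A : Matrix (Fin m) (Fin n) F)} =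
        Fintype.card M := by
      rw [Nat.card_eq_fintype_card]
      exact Fintype.card_congr (Equiv.subtypeUnivEquiv fun x => Nat.zero_le _)
    have h2 : Fintype.card M = q ^ d := by rw [Module.card_eq_pow_finrank (K := F) (V := M), hdim]
    rw [h1, h2]
    push_cast
    linarith
  -- main case : 1 ≤ r
  obtain ⟨ψ, hψA, hψrank⟩ := existsPsiAux A hrank
  set a : M := ⟨A, hAM⟩ with ha'
  have ha : a ≠ 0 := by
    intro h0
    have hA0 : A = 0 := congrArg Subtype.val h0
    rw [hA0, Matrix.rank_zero] at hrank
    omega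
  obtain ⟨W, hW⟩ := Submodule.exists_isCompl (Submodule.span F {a})
  haveI : Fintype W := Fintype.ofFinite _
  have hspan1 : Module.finrank F (Submodule.span F {a}) = 1 := finrank_span_singleton ha
  have hsum := Submodule.finrank_add_eq_of_isCompl hW
  rw [hdim, hspan1] at hsum
  have hd1 : 1 ≤ d := by omega
  have hWr : Module.finrank F W = d - 1 := by omega
  have hcardW : Fintype.card W = q ^ (d - 1) := by
    rw [Module.card_eq_pow_finrank (K := F) (V := W), hWr]
  -- the parametrization
  let Et : F ≃ₗ[F] Submodule.span F {a} := LinearEquiv.toSpanNonzeroSingleton F M a ha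
  let E0 := Submodule.prodEquivOfIsCompl _ _ hW
  let E : W × F ≃ M :=
    (Equiv.prodCongr (Equiv.refl W) Et.toEquiv).trans
      ((Equiv.prodComm _ _).trans E0.toEquiv)
  have hE : ∀ (w : W) (c : F), ((E (w, c) : M) : Matrix (Fin m) (Fin n) F)
      = ((w : M) : Matrix (Fin m) (Fin n) F) + c • A := by
    intro w c
    show (((E0 (Et c, w) : M)) : Matrix (Fin m) (Fin n) F) = _
    rw [Submodule.coe_prodEquivOfIsCompl']
    have hEt : (Et c : M) = c • a := by
      simp [Et, LinearEquiv.toSpanNonzeroSingleton]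
    push_cast [hEt]
    exact add_comm _ _
  -- the predicate
  set P : M → Prop := fun x => (ψ (x : Matrix (Fin m) (Fin n) F)).det ≠ 0 with hP
  -- step 1 : good elements have big rank
  have step1 : Nat.card {x : M // P x} ≤
      Nat.card {A : M // r ≤ Matrix.rank (A : Matrix (Fin m) (Fin n) F)} := by
    apply Nat.card_le_card_of_injective
      (fun x => (⟨x.1, hψrank _ x.2⟩ : {A : M // r ≤ Matrix.rank (A : Matrix (Fin m) (Fin n) F)}))
    intro x y hxy
    have h2 := congrArg Subtype.val hxy
    exact Subtype.ext h2
  -- step 2 : decompose count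
  have step2 : Nat.card {x : M // P x} = ∑ w : W, Fintype.card {c : F // P (E (w, c))} := by
    rw [Nat.card_eq_fintype_card]
    rw [← Fintype.card_sigma]
    apply Fintype.card_congr
    exact ((Equiv.subtypeEquiv E fun p => Iff.rfl).symm.trans
      (Equiv.subtypeProdEquivSigmaSubtype fun (w : W) (c : F) => P (E (w, c))))
  -- per-fiber description
  have hfiber : ∀ (w : W) (c : F),
      P (E (w, c)) ↔ (ψ (((w : M) : Matrix (Fin m) (Fin n) F)) + c • 1).det ≠ 0 := by
    intro w c
    rw [hP]
    simp only [hE w c, map_add, _root_.map_smul, hψA]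
  -- lower bound for each fiber
  have hlow : ∀ w : W, (q : ℤ) - r ≤ Fintype.card {c : F // P (E (w, c))} := by
    intro w
    have hz : Fintype.card {c : F // ¬ P (E (w, c))} ≤ r := by
      rw [Fintype.card_subtype]
      calc (Finset.univ.filter fun c : F => ¬ P (E (w, c))).card
          = (Finset.univ.filter fun c : F =>
              (ψ (((w : M) : Matrix (Fin m) (Fin n) F)) + c • 1).det = 0).card := by
            congr 1
            ext c
            simp only [Finset.mem_filter, hfiber w c, not_not]
        _ ≤ r := zerosLeAux _
    have hcompl : Fintype.card {c : F // ¬ P (E (w, c))} =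
        q - Fintype.card {c : F // P (E (w, c))} := Fintype.card_subtype_compl _
    have hle : Fintype.card {c : F // P (E (w, c))} ≤ q := Fintype.card_subtype_le _
    omega
  -- the fiber at w = 0 is bigger
  have h0 : (Fintype.card {c : F // P (E (0, c))} : ℤ) = q - 1 := by
    have hz : Fintype.card {c : F // ¬ P (E (0, c))} = 1 := by
      rw [Fintype.card_subtype]
      have : (Finset.univ.filter fun c : F => ¬ P (E ((0 : W), c))) = {(0 : F)} := by
        ext c
        simp only [Finset.mem_filter, Finset.mem_univ, true_and, Finset.mem_singleton,
          hfiber 0 c, not_not]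
        rw [show (((0 : W) : M) : Matrix (Fin m) (Fin n) F) = 0 by simp, map_zero, zero_add,
          Matrix.det_smul, Matrix.det_one, mul_one, Fintype.card_fin]
        exact pow_eq_zero_iff (by omega)
      rw [this, Finset.card_singleton]
    have hcompl : Fintype.card {c : F // ¬ P (E (0, c))} =
        q - Fintype.card {c : F // P (E (0, c))} := Fintype.card_subtype_compl _
    have hle : Fintype.card {c : F // P (E (0, c))} ≤ q := Fintype.card_subtype_le _
    omega
  -- sum up
  haveI : Nonempty W := ⟨0⟩
  have hsum2 : ((q : ℤ) - 1) + ((q : ℤ) ^ (d - 1) - 1) * ((q : ℤ) - r) ≤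
      ∑ w : W, (Fintype.card {c : F // P (E (w, c))} : ℤ) := by
    rw [← Finset.add_sum_erase _ _ (Finset.mem_univ (0 : W)), h0]
    have hrest : ((Finset.univ.erase (0 : W)).card : ℤ) * ((q : ℤ) - r) ≤
        ∑ w ∈ Finset.univ.erase (0 : W), (Fintype.card {c : F // P (E (w, c))} : ℤ) := by
      have := Finset.card_nsmul_le_sum (Finset.univ.erase (0 : W))
        (fun w => (Fintype.card {c : F // P (E (w, c))} : ℤ)) ((q : ℤ) - r)
        (fun w _ => hlow w)
      rwa [nsmul_eq_mul] at this
    have hcard : ((Finset.univ.erase (0 : W)).card : ℤ) = (q : ℤ) ^ (d - 1) - 1 := by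
      have h1 : 1 ≤ q ^ (d - 1) := Nat.one_le_pow _ _ (by omega)
      rw [Finset.card_erase_of_mem (Finset.mem_univ _), Finset.card_univ, hcardW,
        Nat.cast_sub h1]
      push_cast
      ring
    rw [hcard] at hrest
    linarith
  -- final arithmetic
  have hfin : (q : ℤ) ^ d - r * (q : ℤ) ^ (d - 1) + r - 1 =
      ((q : ℤ) - 1) + ((q : ℤ) ^ (d - 1) - 1) * ((q : ℤ) - r) := by
    rw [show d = (d - 1) + 1 by omega]
    simp only [Nat.add_sub_cancel]
    ring
  have hcast : (Nat.card {x : M // P x} : ℤ) =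
      ∑ w : W, (Fintype.card {c : F // P (E (w, c))} : ℤ) := by
    rw [step2]
    push_cast
    rfl
  have : ((q : ℤ) - 1) + ((q : ℤ) ^ (d - 1) - 1) * ((q : ℤ) - r) ≤
      (Nat.card {x : M // P x} : ℤ) := by rw [hcast]; exact hsum2
  calc (q : ℤ) ^ d - r * (q : ℤ) ^ (d - 1) + r - 1
      = ((q : ℤ) - 1) + ((q : ℤ) ^ (d - 1) - 1) * ((q : ℤ) - r) := hfin
    _ ≤ (Nat.card {x : M // P x} : ℤ) := this
    _ ≤ _ := by exact_mod_cast step1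
end
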